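/- arXiv:2003.14233 — 9 statements merged into one kernel-verified Lean document; each statement's English description precedes it below -/
import Mathlib

section
/- For every finite tree T (a finite connected acyclic simple graph) with at least one vertex, Γ(T) ≤ 2·b(T) + 2. -/
open SimpleGraph

/-- The degree of a vertex `v` in a simple graph `G`. -/
noncomputable def vdeg {V : Type*} (G : SimpleGraph V) (v : V) : ℕ :=
  Nat.card {w // G.Adj v w}

/-- A Grundy coloring of `G` with `k` colors: a proper coloring whose `k` color classes are
all nonempty (surjectivity) and such that every vertex of a class has a neighbor in every
smaller-indexed class. -/
def IsGrundyColoring {V : Type*} (G : SimpleGraph V) {k : ℕ} (C : V → Fin k) : Prop :=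
  (∀ v w, G.Adj v w → C v ≠ C w) ∧
  Function.Surjective C ∧
  (∀ v : V, ∀ i : Fin k, i < C v → ∃ w, G.Adj v w ∧ C w = i)

/-- The Grundy number of `G`: the largest `k` admitting a Grundy coloring with `k` colors. -/
noncomputable def grundyNum {V : Type*} (G : SimpleGraph V) : ℕ :=
  sSup {k | ∃ C : V → Fin k, IsGrundyColoring G C}

/-- A b-coloring of `G` with `k` colors: a proper coloring such that every color class
contains a vertex having a neighbor in each of the other classes (hence all classes are
nonempty). -/
def IsBColoring {V : Type*} (G : SimpleGraph V) {k : ℕ} (C : V → Fin k) : Prop :=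
  (∀ v w, G.Adj v w → C v ≠ C w) ∧
  (∀ i : Fin k, ∃ v, C v = i ∧ ∀ j : Fin k, j ≠ i → ∃ w, G.Adj v w ∧ C w = j)

/-- The b-chromatic number of `G`: the largest `k` admitting a b-coloring with `k` colors. -/
noncomputable def bChrom {V : Type*} (G : SimpleGraph V) : ℕ :=
  sSup {k | ∃ C : V → Fin k, IsBColoring G C}



section TreeLemmas
variable {V : Type*} {T : SimpleGraph V}

lemma tree_path_length (hT : T.IsTree) {a b : V} (p : T.Walk a b) (hp : p.IsPath) :
    p.length = T.dist a b := by
  obtain ⟨q, hq, hql⟩ := hT.isConnected.exists_path_of_dist a b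
  have := hT.IsAcyclic.path_unique ⟨p, hp⟩ ⟨q, hq⟩
  rw [Subtype.ext_iff] at this
  simp only at this
  rw [this, hql]

lemma tree_concat_path (hT : T.IsTree) {r a b : V} (p : T.Walk r a) (hp : p.IsPath)
    (hab : T.Adj a b) (hb : b ∉ p.support) : (p.concat hab).IsPath := by
  rw [Walk.isPath_def, Walk.support_concat]
  rw [List.nodup_append]
  exact ⟨hp.support_nodup, List.nodup_singleton b, by
    intro x hx y hy
    rw [List.mem_singleton] at hy
    subst hy
    rintro rfl
    exact hb hx⟩

lemma tree_adj_dist_ne (hT : T.IsTree) (r : V) {a b : V} (hab : T.Adj a b) :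
    T.dist r a ≠ T.dist r b := by
  classical
  intro heq
  obtain ⟨p, hp, hpl⟩ := hT.isConnected.exists_path_of_dist r a
  by_cases hb : b ∈ p.support
  · have h1 : (p.takeUntil b hb).length = T.dist r b :=
      tree_path_length hT _ (hp.takeUntil hb)
    have h2 := Walk.take_spec p hb
    have h3 : (p.takeUntil b hb).length + (p.dropUntil b hb).length = p.length := by
      rw [← Walk.length_append, h2]
    have h4 : (p.dropUntil b hb).length = 0 := by omega
    have := Walk.eq_of_length_eq_zero h4
    exact hab.ne this.symm
  · have hcp : (p.concat hab).IsPath := tree_concat_path hT p hp hab hb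
    have := tree_path_length hT _ hcp
    rw [Walk.length_concat] at this
    omega

lemma tree_adj_dist (hT : T.IsTree) (r : V) {a b : V} (hab : T.Adj a b) :
    T.dist r b = T.dist r a + 1 ∨ T.dist r a = T.dist r b + 1 := by
  have hne := tree_adj_dist_ne hT r hab
  have h1 : T.dist a b ≤ 1 := by
    have := SimpleGraph.dist_le (Walk.cons hab Walk.nil)
    simpa using this
  have h2 : T.dist b a ≤ 1 := by
    have := SimpleGraph.dist_le (Walk.cons hab.symm Walk.nil)
    simpa using this
  have t1 : T.dist r b ≤ T.dist r a + T.dist a b := hT.isConnected.dist_triangle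
  have t2 : T.dist r a ≤ T.dist r b + T.dist b a := hT.isConnected.dist_triangle
  omega

lemma tree_parent_unique (hT : T.IsTree) (r : V) {a a' b : V}
    (h : T.Adj a b) (h' : T.Adj a' b)
    (hd : T.dist r a + 1 = T.dist r b) (hd' : T.dist r a' + 1 = T.dist r b) : a = a' := by
  classical
  obtain ⟨p, hp, hpl⟩ := hT.isConnected.exists_path_of_dist r a
  obtain ⟨p', hp', hpl'⟩ := hT.isConnected.exists_path_of_dist r a'
  have hb : b ∉ p.support := by
    intro hb
    have h1 : (p.takeUntil b hb).length = T.dist r b := tree_path_length hT _ (hp.takeUntil hb)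
    have h2 := Walk.length_takeUntil_le p hb
    omega
  have hb' : b ∉ p'.support := by
    intro hb'
    have h1 : (p'.takeUntil b hb').length = T.dist r b :=
      tree_path_length hT _ (hp'.takeUntil hb')
    have h2 := Walk.length_takeUntil_le p' hb'
    omega
  have hq : (p.concat h).IsPath := tree_concat_path hT p hp h hb
  have hq' : (p'.concat h').IsPath := tree_concat_path hT p' hp' h' hb'
  have heq := hT.IsAcyclic.path_unique ⟨p.concat h, hq⟩ ⟨p'.concat h', hq'⟩
  rw [Subtype.ext_iff] at heq
  simp only at heq
  obtain ⟨hv, -⟩ := Walk.concat_inj heq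
  exact hv

end TreeLemmas
/-- pendant-color to Grundy-color translation -/
def phiF (t s : ℕ) : ℕ := if s < t then s else s - 2

/-- colors needing a pendant witness at chain vertex `t` -/
def StP (m t s : ℕ) : Prop := s < m ∧ s ≠ t - 1 ∧ s ≠ t ∧ s ≠ t + 1

/-- a value in {0,1,2} distinct from both arguments (when `p < 2`) -/
def pickF (s p : ℕ) : ℕ := if s ≠ 0 ∧ p ≠ 0 then 0 else if s ≠ 1 ∧ p ≠ 1 then 1 else 2

open Classical in
/-- the chain of vertices of decreasing Grundy colors `k-1, k-2, ...` -/
noncomputable def chainW {V : Type*} [Nonempty V] (T : SimpleGraph V) {k : ℕ}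
    (C : V → Fin k) : ℕ → V
  | 0 => if h : ∃ v, (C v : ℕ) = k - 1 then h.choose else Classical.arbitrary V
  | t+1 => if h : ∃ x, T.Adj (chainW T C t) x ∧ (C x : ℕ) = k - 2 - t then h.choose
           else chainW T C t

open Classical in
/-- pendant neighbors of chain vertices -/
noncomputable def uVert {V : Type*} [Nonempty V] (T : SimpleGraph V) {k : ℕ}
    (C : V → Fin k) (t s : ℕ) : V :=
  if h : ∃ x, T.Adj (chainW T C t) x ∧ (C x : ℕ) = phiF t s then h.choose else chainW T C 0

open Classical in
/-- the b-coloring (as a ℕ-valued function) -/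
noncomputable def colF {V : Type*} [Nonempty V] (T : SimpleGraph V) {k : ℕ}
    (C : V → Fin k) (m : ℕ) (v : V) : ℕ :=
  if h : ∃ t, t < m ∧ v = chainW T C t then Nat.find h
  else if h : ∃ n, n / m < m ∧ StP m (n / m) (n % m) ∧ v = uVert T C (n / m) (n % m) then
    Nat.find h % m
  else if h : ∃ n, n / m < m ∧ StP m (n / m) (n % m) ∧ T.Adj (uVert T C (n / m) (n % m)) v ∧
      T.dist (chainW T C 0) v = n / m + 2 then
    pickF (Nat.find h % m) ((T.dist (chainW T C 0) v + 1) % 2)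
  else T.dist (chainW T C 0) v % 2
lemma exists_bColoring {V : Type*} [Nonempty V] {T : SimpleGraph V} (hT : T.IsTree) {k : ℕ}
    (hk : 3 ≤ k) {C : V → Fin k} (hC : IsGrundyColoring T C) :
    ∃ D : V → Fin ((k + 1) / 2), IsBColoring T D := by
  classical
  set m : ℕ := (k + 1) / 2 with hm
  have hm2 : 2 ≤ m := by omega
  have hmk : 2 * m ≤ k + 1 := by omega
  have hmk' : m + 1 ≤ k := by omega
  have hgk : ∀ v, (C v : ℕ) < k := fun v => (C v).isLt
  have hprop : ∀ {x y}, T.Adj x y → (C x : ℕ) ≠ (C y : ℕ) := by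
    intro x y hxy he
    exact hC.1 x y hxy (Fin.val_injective he)
  have hgr : ∀ (v : V) (j : ℕ), j < (C v : ℕ) → ∃ x, T.Adj v x ∧ (C x : ℕ) = j := by
    intro v j hj
    obtain ⟨x, hx1, hx2⟩ := hC.2.2 v ⟨j, lt_trans hj (hgk v)⟩ (by simpa [Fin.lt_def] using hj)
    exact ⟨x, hx1, by rw [hx2]⟩
  have hr_g : (C (chainW T C 0) : ℕ) = k - 1 := by
    have h : ∃ v, (C v : ℕ) = k - 1 := by
      obtain ⟨v, hv⟩ := hC.2.1 ⟨k - 1, by omega⟩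
      exact ⟨v, by rw [hv]⟩
    rw [chainW, dif_pos h]
    exact h.choose_spec
  -- chain facts
  have hchain : ∀ t, t < m → (C (chainW T C t) : ℕ) = k - 1 - t ∧
      T.dist (chainW T C 0) (chainW T C t) = t ∧
      (0 < t → T.Adj (chainW T C (t - 1)) (chainW T C t)) := by
    intro t
    induction t using Nat.strong_induction_on with
    | _ t IH =>
      match t with
      | 0 =>
        intro _
        refine ⟨by rw [hr_g]; omega, by simp, fun h => absurd h (by omega)⟩
      | Nat.succ t =>
        intro htm
        have ht := IH t (by omega) (by omega)
        have hex : ∃ x, T.Adj (chainW T C t) x ∧ (C x : ℕ) = k - 2 - t := by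
          apply hgr (chainW T C t) (k - 2 - t)
          rw [ht.1]; omega
        have hw1 : chainW T C (t + 1) = hex.choose := by
          rw [chainW, dif_pos hex]
        have hadj : T.Adj (chainW T C t) (chainW T C (t + 1)) := by
          rw [hw1]; exact hex.choose_spec.1
        have hgw : (C (chainW T C (t + 1)) : ℕ) = k - 1 - (t + 1) := by
          rw [hw1, hex.choose_spec.2]; omega
        have hdist : T.dist (chainW T C 0) (chainW T C (t + 1)) = t + 1 := by
          rcases tree_adj_dist hT (chainW T C 0) hadj with h | h
          · rw [h, ht.2.1]
          · exfalso
            rw [ht.2.1] at h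
            rcases Nat.eq_zero_or_pos t with rfl | htpos
            · omega
            · have ht1 := IH (t - 1) (by omega) (by omega)
              have hadj' : T.Adj (chainW T C (t - 1)) (chainW T C t) := ht.2.2 htpos
              have heqw : chainW T C (t + 1) = chainW T C (t - 1) :=
                tree_parent_unique hT (chainW T C 0) hadj.symm hadj'
                  (by rw [ht.2.1]; omega) (by rw [ht1.2.1, ht.2.1]; omega)
              rw [heqw, ht1.1] at hgw
              omega
        exact ⟨hgw, hdist, fun _ => hadj⟩
  have hwg : ∀ t, t < m → (C (chainW T C t) : ℕ) = k - 1 - t := fun t ht => (hchain t ht).1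
  have hwd : ∀ t, t < m → T.dist (chainW T C 0) (chainW T C t) = t :=
    fun t ht => (hchain t ht).2.1
  have hwadj : ∀ t, t < m → 0 < t → T.Adj (chainW T C (t - 1)) (chainW T C t) :=
    fun t ht => (hchain t ht).2.2
  have hw_inj : ∀ t t', t < m → t' < m → chainW T C t = chainW T C t' → t = t' := by
    intro t t' ht ht' he
    have h1 := hwd t ht
    rw [he, hwd t' ht'] at h1
    omega
  -- pendant facts
  have hSt3 : ∀ t s, t < m → StP m t s → 3 ≤ m := by
    intro t s ht hs
    obtain ⟨h1, h2, h3, h4⟩ := hs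
    omega
  have hphi_le : ∀ t s, t < m → StP m t s → phiF t s + t + 3 ≤ k := by
    intro t s ht hs
    obtain ⟨h1, h2, h3, h4⟩ := hs
    unfold phiF
    split <;> omega
  have hu_ex : ∀ t s, t < m → StP m t s →
      ∃ x, T.Adj (chainW T C t) x ∧ (C x : ℕ) = phiF t s := by
    intro t s ht hs
    have h1 := hphi_le t s ht hs
    exact hgr (chainW T C t) (phiF t s) (by rw [hwg t ht]; omega)
  have hu_adj : ∀ t s, t < m → StP m t s → T.Adj (chainW T C t) (uVert T C t s) := by
    intro t s ht hs
    have h := hu_ex t s ht hs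
    rw [uVert, dif_pos h]
    exact h.choose_spec.1
  have hu_g : ∀ t s, t < m → StP m t s → (C (uVert T C t s) : ℕ) = phiF t s := by
    intro t s ht hs
    have h := hu_ex t s ht hs
    rw [uVert, dif_pos h]
    exact h.choose_spec.2
  have hu_d : ∀ t s, t < m → StP m t s → T.dist (chainW T C 0) (uVert T C t s) = t + 1 := by
    intro t s ht hs
    have hadj := hu_adj t s ht hs
    have hple := hphi_le t s ht hs
    rcases tree_adj_dist hT (chainW T C 0) hadj with h | h
    · rw [h, hwd t ht]
    · exfalso
      rw [hwd t ht] at h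
      rcases Nat.eq_zero_or_pos t with rfl | htpos
      · omega
      · have ht1m : t - 1 < m := by omega
        have heqw : uVert T C t s = chainW T C (t - 1) :=
          tree_parent_unique hT (chainW T C 0) hadj.symm (hwadj t ht htpos)
            (by rw [hwd t ht]; omega) (by rw [hwd (t - 1) ht1m, hwd t ht]; omega)
        have := hu_g t s ht hs
        rw [heqw, hwg (t - 1) ht1m] at this
        omega
  have hu_ne_w : ∀ t s t', t < m → StP m t s → t' < m → uVert T C t s ≠ chainW T C t' := by
    intro t s t' ht hs ht' he
    have hd1 := hu_d t s ht hs
    rw [he, hwd t' ht'] at hd1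
    have hg1 := hu_g t s ht hs
    rw [he, hwg t' ht'] at hg1
    have := hphi_le t s ht hs
    omega
  have hu_inj : ∀ t s t' s', t < m → StP m t s → t' < m → StP m t' s' →
      uVert T C t s = uVert T C t' s' → t = t' ∧ s = s' := by
    intro t s t' s' ht hs ht' hs' he
    have hd1 := hu_d t s ht hs
    rw [he, hu_d t' s' ht' hs'] at hd1
    have htt : t = t' := by omega
    subst htt
    have hg1 := hu_g t s ht hs
    rw [he, hu_g t s' ht hs'] at hg1
    obtain ⟨a1, a2, a3, a4⟩ := hs
    obtain ⟨b1, b2, b3, b4⟩ := hs'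
    unfold phiF at hg1
    split_ifs at hg1 <;> omega
  have hpick : ∀ s p, p < 2 → pickF s p ≤ 2 ∧ pickF s p ≠ s ∧ pickF s p ≠ p := by
    intro s p hp
    unfold pickF
    split_ifs <;> omega
  -- color computation lemmas
  have hcB : ∀ t, t < m → colF T C m (chainW T C t) = t := by
    intro t ht
    have hx : ∃ t', t' < m ∧ chainW T C t = chainW T C t' := ⟨t, ht, rfl⟩
    rw [colF, dif_pos hx]
    have hspec := Nat.find_spec hx
    exact hw_inj _ _ hspec.1 ht hspec.2.symm
  have hcU : ∀ t s, t < m → StP m t s → colF T C m (uVert T C t s) = s := by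
    intro t s ht hs
    have hnot1 : ¬ ∃ t', t' < m ∧ uVert T C t s = chainW T C t' := by
      rintro ⟨t', ht', he⟩
      exact hu_ne_w t s t' ht hs ht' he
    have hx : ∃ n, n / m < m ∧ StP m (n / m) (n % m) ∧
        uVert T C t s = uVert T C (n / m) (n % m) := by
      refine ⟨m * t + s, ?_⟩
      have hdiv : (m * t + s) / m = t := by
        rw [Nat.mul_add_div (by omega)]
        have : s / m = 0 := Nat.div_eq_of_lt hs.1
        omega
      have hmod : (m * t + s) % m = s := by
        rw [Nat.mul_add_mod]
        exact Nat.mod_eq_of_lt hs.1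
      rw [hdiv, hmod]
      exact ⟨ht, hs, rfl⟩
    rw [colF, dif_neg hnot1, dif_pos hx]
    obtain ⟨hn1, hn2, hn3⟩ := Nat.find_spec hx
    exact (hu_inj _ _ _ _ hn1 hn2 ht hs hn3.symm).2
  have hclt : ∀ v, colF T C m v < m := by
    intro v
    rw [colF]
    split_ifs with h1 h2 h3
    · exact (Nat.find_spec h1).1
    · exact Nat.mod_lt _ (by omega)
    · obtain ⟨hn1, hn2, -, -⟩ := Nat.find_spec h3
      have h3m := hSt3 _ _ hn1 hn2
      have := (hpick (Nat.find h3 % m) ((T.dist (chainW T C 0) v + 1) % 2)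
        (Nat.mod_lt _ (by omega))).1
      omega
    · have : T.dist (chainW T C 0) v % 2 < 2 := Nat.mod_lt _ (by omega)
      omega
  -- properness: child has different color from parent
  have hstep : ∀ x y, T.Adj x y →
      T.dist (chainW T C 0) y = T.dist (chainW T C 0) x + 1 → colF T C m x ≠ colF T C m y := by
    intro x y hxy hdy
    by_cases h1 : ∃ t', t' < m ∧ y = chainW T C t'
    · obtain ⟨t, htm, hyw⟩ := h1
      subst hyw
      have hdyt := hwd t htm
      have ht1 : 1 ≤ t := by omega
      have ht1m : t - 1 < m := by omega
      have hx : x = chainW T C (t - 1) :=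
        tree_parent_unique hT (chainW T C 0) hxy (hwadj t htm (by omega))
          (by omega) (by rw [hwd (t - 1) ht1m, hwd t htm]; omega)
      rw [hx, hcB (t - 1) ht1m, hcB t htm]
      omega
    · by_cases h2 : ∃ n, n / m < m ∧ StP m (n / m) (n % m) ∧ y = uVert T C (n / m) (n % m)
      · obtain ⟨n, hn1, hn2, hyu⟩ := h2
        subst hyu
        have hdyu := hu_d _ _ hn1 hn2
        have hx : x = chainW T C (n / m) :=
          tree_parent_unique hT (chainW T C 0) hxy (hu_adj _ _ hn1 hn2)
            (by omega) (by rw [hwd _ hn1]; omega)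
        rw [hx, hcB _ hn1, hcU _ _ hn1 hn2]
        exact fun he => hn2.2.2.1 he.symm
      · by_cases h3 : ∃ n, n / m < m ∧ StP m (n / m) (n % m) ∧
            T.Adj (uVert T C (n / m) (n % m)) y ∧ T.dist (chainW T C 0) y = n / m + 2
        · have hcy : colF T C m y = pickF (Nat.find h3 % m)
              ((T.dist (chainW T C 0) y + 1) % 2) := by
            rw [colF, dif_neg h1, dif_neg h2, dif_pos h3]
          obtain ⟨hn1, hn2, hn3, hn4⟩ := Nat.find_spec h3
          have hdun := hu_d _ _ hn1 hn2
          have hx : x = uVert T C (Nat.find h3 / m) (Nat.find h3 % m) :=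
            tree_parent_unique hT (chainW T C 0) hxy hn3 (by omega) (by omega)
          rw [hcy, hx, hcU _ _ hn1 hn2]
          have := (hpick (Nat.find h3 % m) ((T.dist (chainW T C 0) y + 1) % 2)
            (Nat.mod_lt _ (by omega))).2.1
          exact fun he => this he.symm
        · have hcy : colF T C m y = T.dist (chainW T C 0) y % 2 := by
            rw [colF, dif_neg h1, dif_neg h2, dif_neg h3]
          by_cases g1 : ∃ t', t' < m ∧ x = chainW T C t'
          · obtain ⟨t, htm, hxw⟩ := g1
            subst hxw
            have hdxt := hwd t htm
            rw [hcy, hcB t htm]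
            omega
          · by_cases g2 : ∃ n, n / m < m ∧ StP m (n / m) (n % m) ∧ x = uVert T C (n / m) (n % m)
            · exfalso
              obtain ⟨n, hn1, hn2, hxu⟩ := g2
              apply h3
              refine ⟨n, hn1, hn2, by rw [← hxu]; exact hxy, ?_⟩
              have := hu_d _ _ hn1 hn2
              rw [← hxu] at this
              omega
            · by_cases g3 : ∃ n, n / m < m ∧ StP m (n / m) (n % m) ∧
                  T.Adj (uVert T C (n / m) (n % m)) x ∧ T.dist (chainW T C 0) x = n / m + 2
              · have hcx : colF T C m x = pickF (Nat.find g3 % m)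
                    ((T.dist (chainW T C 0) x + 1) % 2) := by
                  rw [colF, dif_neg g1, dif_neg g2, dif_pos g3]
                rw [hcx, hcy]
                have := (hpick (Nat.find g3 % m) ((T.dist (chainW T C 0) x + 1) % 2)
                  (Nat.mod_lt _ (by omega))).2.2
                rw [hdy]
                exact this
              · have hcx : colF T C m x = T.dist (chainW T C 0) x % 2 := by
                  rw [colF, dif_neg g1, dif_neg g2, dif_neg g3]
                rw [hcx, hcy]
                omega
  -- assemble the coloring
  refine ⟨fun v => ⟨colF T C m v, hclt v⟩, ?_, ?_⟩
  · intro x y hxy he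
    rw [Fin.mk.injEq] at he
    rcases tree_adj_dist hT (chainW T C 0) hxy with h | h
    · exact hstep x y hxy h he
    · exact hstep y x hxy.symm h he.symm
  · intro i
    have him : (i : ℕ) < m := i.isLt
    refine ⟨chainW T C (i : ℕ), by simp [hcB _ him], ?_⟩
    intro j hj
    have hjm : (j : ℕ) < m := j.isLt
    have hij : (j : ℕ) ≠ (i : ℕ) := fun he => hj (Fin.val_injective he)
    by_cases hj1 : (j : ℕ) + 1 = (i : ℕ)
    · refine ⟨chainW T C ((i : ℕ) - 1), ?_, ?_⟩
      · exact (hwadj _ him (by omega)).symm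
      · apply Fin.val_injective
        simp only [hcB _ (show (i : ℕ) - 1 < m by omega)]
        omega
    · by_cases hj2 : (j : ℕ) = (i : ℕ) + 1
      · refine ⟨chainW T C ((j : ℕ)), ?_, ?_⟩
        · have h5 := hwadj _ hjm (by omega)
          have hji : (j : ℕ) - 1 = (i : ℕ) := by omega
          rw [hji] at h5
          exact h5
        · apply Fin.val_injective
          simp [hcB _ hjm]
      · have hst : StP m (i : ℕ) (j : ℕ) := ⟨hjm, by omega, by omega, by omega⟩
        refine ⟨uVert T C (i : ℕ) (j : ℕ), hu_adj _ _ him hst, ?_⟩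
        apply Fin.val_injective
        simp [hcU _ _ him hst]
/-- For every finite tree `T` with at least one vertex, `Γ(T) ≤ 2·b(T) + 2`. -/
theorem stmt1 {V : Type*} [Fintype V] [Nonempty V] (T : SimpleGraph V) (hT : T.IsTree) :
    grundyNum T ≤ 2 * bChrom T + 2 := by
  classical
  by_cases h2 : grundyNum T ≤ 2
  · omega
  push_neg at h2
  have hbddG : BddAbove {k | ∃ C : V → Fin k, IsGrundyColoring T C} := by
    refine ⟨Fintype.card V, fun k hk => ?_⟩
    obtain ⟨C, hC⟩ := hk
    simpa using Fintype.card_le_of_surjective C hC.2.1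
  have hne : {k | ∃ C : V → Fin k, IsGrundyColoring T C}.Nonempty := by
    by_contra h
    rw [Set.not_nonempty_iff_eq_empty] at h
    rw [grundyNum, h] at h2
    simp at h2
  have hmem := Nat.sSup_mem hne hbddG
  obtain ⟨C, hC⟩ := hmem
  obtain ⟨D, hD⟩ := exists_bColoring hT (by omega : 3 ≤ grundyNum T) hC
  have hbddB : BddAbove {k | ∃ C : V → Fin k, IsBColoring T C} := by
    refine ⟨Fintype.card V, fun k hk => ?_⟩
    obtain ⟨E, hE⟩ := hk
    have hsurj : Function.Surjective E := fun i => (hE.2 i).imp (fun v hv => hv.1)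
    simpa using Fintype.card_le_of_surjective E hsurj
  have hb2 : (grundyNum T + 1) / 2 ≤ bChrom T := le_csSup hbddB ⟨D, hD⟩
  omega
end

section
/- For every finite simple graph G with at least one vertex, Γ(G) ≤ 2·m(G). -/
open SimpleGraph

/-- The parameter `m(G)`: the largest `k` such that `G` has `k` vertices each of degree at
least `k - 1` (equivalently, `max {i : d_i ≥ i - 1}` for the non-increasing degree
sequence `d_1 ≥ d_2 ≥ …`). -/
noncomputable def mParam {V : Type*} (G : SimpleGraph V) : ℕ :=
  sSup {k | ∃ s : Finset V, s.card = k ∧ ∀ v ∈ s, k - 1 ≤ vdeg G v}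

lemma deg_ge {V : Type*} [Fintype V] (G : SimpleGraph V) {k : ℕ} (C : V → Fin k)
    (h : IsGrundyColoring G C) (v : V) : (C v : ℕ) ≤ vdeg G v := by
  obtain ⟨hp, hs, hg⟩ := h
  have hex : ∀ j : Fin (C v : ℕ), ∃ w : {w // G.Adj v w},
      C w.1 = ⟨j.1, j.2.trans (C v).2⟩ := by
    intro j
    obtain ⟨w, hw, hc⟩ := hg v ⟨j.1, j.2.trans (C v).2⟩ (by exact j.2)
    exact ⟨⟨w, hw⟩, hc⟩
  choose f hf using hex
  have hinj : Function.Injective f := by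
    intro a b hab
    have h2 := (hf a).symm.trans ((congrArg (fun w => C w.1) hab).trans (hf b))
    have := congrArg Fin.val h2
    simp at this
    exact Fin.ext this
  have := Nat.card_le_card_of_injective f hinj
  simpa [vdeg] using this

/-- For every finite simple graph `G` with at least one vertex, `Γ(G) ≤ 2·m(G)`. -/
theorem stmt2 {V : Type*} [Fintype V] [Nonempty V] (G : SimpleGraph V) :
    grundyNum G ≤ 2 * mParam G := by
  classical
  apply csSup_le'
  rintro k ⟨C, hC⟩
  rcases Nat.eq_zero_or_pos k with rfl | hk0
  · simp
  set t := (k + 1) / 2 with ht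
  have htk : t ≤ k := by omega
  choose g hg using hC.2.1
  have hmem : t ∈ {n | ∃ s : Finset V, s.card = n ∧ ∀ v ∈ s, n - 1 ≤ vdeg G v} := by
    refine ⟨(Finset.univ : Finset (Fin t)).image
      (fun j => g ⟨k - t + j.1, by have := j.2; omega⟩), ?_, ?_⟩
    · rw [Finset.card_image_of_injective _ ?_, Finset.card_univ, Fintype.card_fin]
      intro a b hab
      have h2 := ((hg ⟨k - t + a.1, by have := a.2; omega⟩).symm.trans
        (congrArg C hab)).trans (hg ⟨k - t + b.1, by have := b.2; omega⟩)
      have := congrArg Fin.val h2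
      simp at this
      exact Fin.ext (by omega)
    · intro v hv
      simp only [Finset.mem_image, Finset.mem_univ, true_and] at hv
      obtain ⟨j, rfl⟩ := hv
      have h1 := deg_ge G C hC (g ⟨k - t + j.1, by have := j.2; omega⟩)
      rw [hg] at h1
      simp only [Fin.val_mk] at h1
      have h3 := j.2
      omega
  have hbdd : BddAbove {n | ∃ s : Finset V, s.card = n ∧ ∀ v ∈ s, n - 1 ≤ vdeg G v} := by
    refine ⟨Fintype.card V, ?_⟩
    rintro n ⟨s, rfl, -⟩
    exact s.card_le_univ
  have hle : t ≤ mParam G := le_csSup hbdd hmem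
  omega
end

section
/- If a finite simple graph G admits a Grundy coloring with p colors, then for every i with 1 ≤ i ≤ p, G has at least i vertices of degree at least p − i. -/
open SimpleGraph

/-- If a finite simple graph `G` admits a Grundy coloring with `p` colors, then for every
`i` with `1 ≤ i ≤ p`, `G` has at least `i` vertices of degree at least `p - i`. -/
theorem stmt3 {V : Type*} [Fintype V] (G : SimpleGraph V) {p : ℕ} (C : V → Fin p)
    (hC : IsGrundyColoring G C) :
    ∀ i : ℕ, 1 ≤ i → i ≤ p → ∃ s : Finset V, s.card = i ∧ ∀ v ∈ s, p - i ≤ vdeg G v := by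
  classical
  -- Key lemma: any vertex has degree at least its color index.
  have key : ∀ v : V, (C v : ℕ) ≤ vdeg G v := by
    intro v
    have : ∀ l : Fin (C v : ℕ), ∃ w : {w // G.Adj v w}, C w.1 = ⟨l, l.2.trans (C v).2⟩ := by
      intro l
      obtain ⟨w, hw, hcw⟩ := hC.2.2 v ⟨l, l.2.trans (C v).2⟩ (by exact l.2)
      exact ⟨⟨w, hw⟩, hcw⟩
    choose f hf using this
    have hinj : Function.Injective f := by
      intro a b hab
      have : (⟨a, a.2.trans (C v).2⟩ : Fin p) = ⟨b, b.2.trans (C v).2⟩ := by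
        rw [← hf a, ← hf b, hab]
      exact Fin.ext (by simpa using congrArg Fin.val this)
    have := Nat.card_le_card_of_injective f hinj
    simpa [vdeg] using this
  intro i hi1 hip
  -- pick a vertex of each color p - i + t, t < i
  have hsurj := hC.2.1
  choose g hg using hsurj
  let f : Fin i → V := fun t => g ⟨p - i + t, by omega⟩
  have hfinj : Function.Injective f := by
    intro a b hab
    have : (⟨p - i + a, by omega⟩ : Fin p) = ⟨p - i + b, by omega⟩ := by
      rw [← hg ⟨p - i + a, by omega⟩, ← hg ⟨p - i + b, by omega⟩]
      exact congrArg C hab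
    have := congrArg Fin.val this
    simp at this
    exact Fin.ext (by omega)
  refine ⟨Finset.univ.image f, ?_, ?_⟩
  · rw [Finset.card_image_of_injective _ hfinj, Finset.card_univ, Fintype.card_fin]
  · intro v hv
    simp only [Finset.mem_image] at hv
    obtain ⟨t, -, rfl⟩ := hv
    have h1 : (C (f t) : ℕ) = p - i + t := by
      have := congrArg Fin.val (hg ⟨p - i + t, by omega⟩)
      simpa [f] using this
    have := key (f t)
    omega
end

section
/- For every t ≥ 2, the graph B_t satisfies Γ(B_t) = t + 1. -/
open SimpleGraph

/-- The graph `B_t`: the complete bipartite graph `K_{t,t}` on parts `{u_1,…,u_t}` and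
`{w_1,…,w_t}` minus a matching of size `t - 1`; `u_i` is adjacent to `w_j` iff `i ≠ j`
or `i = j` is the last index. -/
def Bgraph (t : ℕ) : SimpleGraph (Fin t ⊕ Fin t) :=
  SimpleGraph.fromRel (fun a b =>
    match a, b with
    | Sum.inl i, Sum.inr j => i ≠ j ∨ (i = j ∧ (i : ℕ) = t - 1)
    | _, _ => False)

lemma bgraph_adj (t : ℕ) (i j : Fin t) :
    (Bgraph t).Adj (Sum.inl i) (Sum.inr j) ↔ (i ≠ j ∨ (i = j ∧ (i:ℕ) = t-1)) := by
  simp [Bgraph, SimpleGraph.fromRel_adj]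

lemma bgraph_not_adj_ll (t : ℕ) (i j : Fin t) :
    ¬ (Bgraph t).Adj (Sum.inl i) (Sum.inl j) := by
  simp [Bgraph, SimpleGraph.fromRel_adj]

lemma bgraph_not_adj_rr (t : ℕ) (i j : Fin t) :
    ¬ (Bgraph t).Adj (Sum.inr i) (Sum.inr j) := by
  simp [Bgraph, SimpleGraph.fromRel_adj]

lemma upper (t k : ℕ) (C : Fin t ⊕ Fin t → Fin k)
    (hC : IsGrundyColoring (Bgraph t) C) : k ≤ t + 1 := by
  rcases k with _ | k'
  · omega
  obtain ⟨v, hv⟩ := hC.2.1 (Fin.last k')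
  choose f hadj hcol using fun i : Fin k' =>
    hC.2.2 v i.castSucc (by rw [hv]; exact Fin.castSucc_lt_last i)
  have hfinj : Function.Injective f := by
    intro i j hij
    have h1 := hcol i
    have h2 := hcol j
    rw [hij, h2] at h1
    exact Fin.castSucc_injective _ h1.symm
  suffices h : k' ≤ t by omega
  cases v with
  | inl a =>
    have hmem : ∀ i, ∃ j : Fin t, f i = Sum.inr j := by
      intro i
      cases hfi : f i with
      | inl b => exact absurd (hfi ▸ hadj i) (bgraph_not_adj_ll t a b)
      | inr b => exact ⟨b, rfl⟩
    choose g hg using hmem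
    have : Function.Injective g := by
      intro i j hij
      apply hfinj
      rw [hg i, hg j, hij]
    simpa using Fintype.card_le_of_injective g this
  | inr a =>
    have hmem : ∀ i, ∃ j : Fin t, f i = Sum.inl j := by
      intro i
      cases hfi : f i with
      | inl b => exact ⟨b, rfl⟩
      | inr b => exact absurd (hfi ▸ hadj i) (bgraph_not_adj_rr t a b)
    choose g hg using hmem
    have : Function.Injective g := by
      intro i j hij
      apply hfinj
      rw [hg i, hg j, hij]
    simpa using Fintype.card_le_of_injective g this

def col (t : ℕ) : Fin t ⊕ Fin t → Fin (t + 1)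
  | Sum.inl i => if (i : ℕ) = t - 1 then ⟨t, Nat.lt_succ_self t⟩
                 else ⟨i, Nat.lt_succ_of_lt i.isLt⟩
  | Sum.inr j => ⟨j, Nat.lt_succ_of_lt j.isLt⟩

lemma lower (t : ℕ) (ht : 2 ≤ t) : IsGrundyColoring (Bgraph t) (col t) := by
  have key : ∀ (i j : Fin t), (Bgraph t).Adj (Sum.inl i) (Sum.inr j) →
      col t (Sum.inl i) ≠ col t (Sum.inr j) := by
    intro i j hadj
    have h := (bgraph_adj t i j).1 hadj
    simp only [col]
    split
    · intro he
      have := congrArg Fin.val he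
      simp at this
      omega
    · rename_i hne
      intro he
      have hv := congrArg Fin.val he
      simp at hv
      rcases h with h | ⟨_, h2⟩
      · exact h (Fin.ext hv)
      · exact hne h2
  refine ⟨?_, ?_, ?_⟩
  · intro v w hadj
    cases v with
    | inl i =>
      cases w with
      | inl j => exact absurd hadj (bgraph_not_adj_ll t i j)
      | inr j => exact key i j hadj
    | inr j =>
      cases w with
      | inl i => exact (key i j hadj.symm).symm
      | inr j' => exact absurd hadj (bgraph_not_adj_rr t j j')
  · intro c
    by_cases hc : (c : ℕ) = t
    · refine ⟨Sum.inl ⟨t - 1, by omega⟩, ?_⟩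
      simp only [col]
      rw [if_pos trivial]
      exact Fin.ext hc.symm
    · have hct : (c : ℕ) < t := by have := c.isLt; omega
      exact ⟨Sum.inr ⟨c, hct⟩, Fin.ext rfl⟩
  · intro v i hi
    cases v with
    | inl a =>
      by_cases ha : (a : ℕ) = t - 1
      · have hC : col t (Sum.inl a) = ⟨t, Nat.lt_succ_self t⟩ := by
          simp only [col]; rw [if_pos ha]
        rw [hC, Fin.lt_def] at hi
        simp at hi
        refine ⟨Sum.inr ⟨i, hi⟩, ?_, Fin.ext rfl⟩
        rw [bgraph_adj]
        by_cases hia : (i : ℕ) = (a : ℕ)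
        · exact Or.inr ⟨Fin.ext (by simpa using hia.symm), ha⟩
        · exact Or.inl (fun he => hia (by rw [he]))
      · have hC : col t (Sum.inl a) = ⟨a, Nat.lt_succ_of_lt a.isLt⟩ := by
          simp only [col]; rw [if_neg ha]
        rw [hC, Fin.lt_def] at hi
        simp at hi
        have hit : (i : ℕ) < t := lt_trans hi a.isLt
        refine ⟨Sum.inr ⟨i, hit⟩, ?_, Fin.ext rfl⟩
        rw [bgraph_adj]
        exact Or.inl (fun he => by
          have := congrArg Fin.val he
          simp only [Fin.val_mk] at this
          omega)
    | inr b =>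
      have hC : col t (Sum.inr b) = ⟨b, Nat.lt_succ_of_lt b.isLt⟩ := rfl
      rw [hC, Fin.lt_def] at hi
      simp at hi
      have hit : (i : ℕ) < t := lt_trans hi b.isLt
      refine ⟨Sum.inl ⟨i, hit⟩, ?_, ?_⟩
      · refine ((bgraph_adj t ⟨i, hit⟩ b).2 ?_).symm
        exact Or.inl (fun he => by
          have := congrArg Fin.val he
          simp only [Fin.val_mk] at this
          omega)
      · simp only [col]
        rw [if_neg (show ¬(((⟨(i : ℕ), hit⟩ : Fin t) : ℕ) = t - 1) by
          have hb := b.isLt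
          simp only [Fin.val_mk]
          omega)]

/-- For every `t ≥ 2`, `Γ(B_t) = t + 1`. -/
theorem stmt4 (t : ℕ) (ht : 2 ≤ t) : grundyNum (Bgraph t) = t + 1 := by
  have hub : ∀ k ∈ {k | ∃ C : Fin t ⊕ Fin t → Fin k, IsGrundyColoring (Bgraph t) C},
      k ≤ t + 1 := fun k hk => by
    obtain ⟨C, hC⟩ := hk
    exact upper t k C hC
  have hmem : t + 1 ∈ {k | ∃ C : Fin t ⊕ Fin t → Fin k, IsGrundyColoring (Bgraph t) C} :=
    ⟨col t, lower t ht⟩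
  unfold grundyNum
  exact le_antisymm (csSup_le ⟨t + 1, hmem⟩ hub) (le_csSup ⟨t + 1, hub⟩ hmem)
end

section
/- For every t ≥ 2, the graph B_t satisfies b(B_t) = 2. -/
open SimpleGraph

/-- For every `t ≥ 2`, `b(B_t) = 2`. -/
theorem stmt5 (t : ℕ) (ht : 2 ≤ t) : bChrom (Bgraph t) = 2 := by
  have hadjlr : ∀ i j : Fin t,
      (Bgraph t).Adj (Sum.inl i) (Sum.inr j) ↔ (i ≠ j ∨ (i = j ∧ (i : ℕ) = t - 1)) := by
    intro i j; simp [Bgraph, SimpleGraph.fromRel_adj]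
  have hadjll : ∀ i j : Fin t, ¬ (Bgraph t).Adj (Sum.inl i) (Sum.inl j) := by
    intro i j; simp [Bgraph, SimpleGraph.fromRel_adj]
  have hadjrr : ∀ i j : Fin t, ¬ (Bgraph t).Adj (Sum.inr i) (Sum.inr j) := by
    intro i j; simp [Bgraph, SimpleGraph.fromRel_adj]
  set L : Fin t := ⟨t - 1, by omega⟩ with hL
  have hadjL : ∀ j : Fin t, (Bgraph t).Adj (Sum.inl L) (Sum.inr j) := by
    intro j
    rw [hadjlr]
    rcases eq_or_ne L j with h | h
    · exact Or.inr ⟨h, rfl⟩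
    · exact Or.inl h
  have hadjR : ∀ i : Fin t, (Bgraph t).Adj (Sum.inl i) (Sum.inr L) := by
    intro i
    rw [hadjlr]
    rcases eq_or_ne i L with h | h
    · exact Or.inr ⟨h, by rw [h]⟩
    · exact Or.inl h
  -- upper bound
  have hub : ∀ k ∈ {k | ∃ C : (Fin t ⊕ Fin t) → Fin k, IsBColoring (Bgraph t) C}, k ≤ 2 := by
    rintro k ⟨C, hprop, hb⟩
    by_contra hk
    push_neg at hk
    -- no right vertex has color C (inl L)
    have hW : ∀ j : Fin t, C (Sum.inr j) ≠ C (Sum.inl L) := fun j =>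
      (hprop _ _ (hadjL j)).symm
    -- no left vertex has color C (inr L)
    have hU : ∀ i : Fin t, C (Sum.inl i) ≠ C (Sum.inr L) := fun i =>
      hprop _ _ (hadjR i)
    have hgamma : ∃ γ : Fin k, γ ≠ C (Sum.inl L) ∧ γ ≠ C (Sum.inr L) := by
      by_contra h
      push_neg at h
      have hsub : (Finset.univ : Finset (Fin k)) ⊆ {C (Sum.inl L), C (Sum.inr L)} := by
        intro γ _
        simp only [Finset.mem_insert, Finset.mem_singleton]
        rcases eq_or_ne γ (C (Sum.inl L)) with h1 | h1
        · exact Or.inl h1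
        · exact Or.inr (h γ h1)
      have := Finset.card_le_card hsub
      have h2 : ({C (Sum.inl L), C (Sum.inr L)} : Finset (Fin k)).card ≤ 2 :=
        (Finset.card_insert_le _ _).trans (by simp)
      simp only [Finset.card_univ, Fintype.card_fin] at this
      omega
    obtain ⟨γ, hγ1, hγ2⟩ := hgamma
    obtain ⟨v, hvγ, hv⟩ := hb γ
    cases v with
    | inl i =>
      obtain ⟨w, hw, hwc⟩ := hv (C (Sum.inl L)) (fun h => hγ1 h.symm)
      cases w with
      | inl i' => exact hadjll i i' hw
      | inr j' => exact hW j' hwc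
    | inr j =>
      obtain ⟨w, hw, hwc⟩ := hv (C (Sum.inr L)) (fun h => hγ2 h.symm)
      cases w with
      | inr j' => exact hadjrr j j' hw
      | inl i' => exact hU i' hwc
  -- the 2-coloring
  have h2 : 2 ∈ {k | ∃ C : (Fin t ⊕ Fin t) → Fin k, IsBColoring (Bgraph t) C} := by
    refine ⟨Sum.elim (fun _ => 0) (fun _ => 1), ?_, ?_⟩
    · intro v w hvw
      cases v with
      | inl i =>
        cases w with
        | inl i' => exact absurd hvw (hadjll i i')
        | inr j => simp
      | inr j =>
        cases w with
        | inr j' => exact absurd hvw (hadjrr j j')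
        | inl i => simp
    · intro i
      have h01 : ((⟨0, by omega⟩ : Fin t) : Fin t) ≠ ⟨1, by omega⟩ := by
        intro h; simpa using congrArg Fin.val h
      fin_cases i
      · refine ⟨Sum.inl ⟨0, by omega⟩, rfl, ?_⟩
        intro j hj
        refine ⟨Sum.inr ⟨1, by omega⟩, (hadjlr _ _).2 (Or.inl h01), ?_⟩
        simp only [Sum.elim_inr]
        fin_cases j <;> simp_all
      · refine ⟨Sum.inr ⟨1, by omega⟩, rfl, ?_⟩
        intro j hj
        refine ⟨Sum.inl ⟨0, by omega⟩, ((hadjlr _ _).2 (Or.inl h01)).symm, ?_⟩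
        simp only [Sum.elim_inl]
        fin_cases j <;> simp_all
  have hbdd : BddAbove {k | ∃ C : (Fin t ⊕ Fin t) → Fin k, IsBColoring (Bgraph t) C} := ⟨2, hub⟩
  exact le_antisymm (csSup_le ⟨2, h2⟩ hub) (le_csSup hbdd h2)
end

section
/- For every t ≥ 4, the graph B_t is not b-monotone: B_t has an induced subgraph H with b(H) > b(B_t). -/
open SimpleGraph

lemma bgraph_adj_lr (t : ℕ) (i j : Fin t) :
    (Bgraph t).Adj (Sum.inl i) (Sum.inr j) ↔ (i ≠ j ∨ (i = j ∧ (i : ℕ) = t - 1)) := by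
  simp [Bgraph, SimpleGraph.fromRel_adj]

lemma bcoloring_le_card {V : Type*} [Finite V] {G : SimpleGraph V} {k : ℕ}
    {C : V → Fin k} (h : IsBColoring G C) : k ≤ Nat.card V := by
  have f : ∀ i : Fin k, ∃ v, C v = i := fun i => (h.2 i).imp (fun v hv => hv.1)
  choose g hg using f
  have hinj : Function.Injective g := fun i j hij => by rw [← hg i, ← hg j, hij]
  calc k = Nat.card (Fin k) := by simp
    _ ≤ Nat.card V := Nat.card_le_card_of_injective g hinj

/-- The index of a vertex of `B_t`, forgetting the side. -/
def bIdx {t : ℕ} : Fin t ⊕ Fin t → ℕ := Sum.elim Fin.val Fin.val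

/-- For every `t ≥ 4`, the graph `B_t` is not b-monotone: it has an induced subgraph `H`
with `b(H) > b(B_t)`. -/
theorem stmt11 (t : ℕ) (ht : 4 ≤ t) :
    ∃ s : Set (Fin t ⊕ Fin t), bChrom (Bgraph t) < bChrom ((Bgraph t).induce s) := by
  have ht0 : 0 < t := by omega
  set last : Fin t := ⟨t - 1, by omega⟩ with hlast
  have hadj_last_r : ∀ j : Fin t, (Bgraph t).Adj (Sum.inl last) (Sum.inr j) := by
    intro j
    rw [bgraph_adj_lr]
    rcases eq_or_ne last j with rfl | hne
    · exact Or.inr ⟨rfl, rfl⟩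
    · exact Or.inl hne
  have hadj_l_last : ∀ i : Fin t, (Bgraph t).Adj (Sum.inl i) (Sum.inr last) := by
    intro i
    rcases eq_or_ne i last with rfl | hne
    · exact hadj_last_r last
    · exact (bgraph_adj_lr t i last).mpr (Or.inl hne)
  -- upper bound: bChrom (Bgraph t) ≤ 2
  have hub : bChrom (Bgraph t) ≤ 2 := by
    apply csSup_le
    · -- nonempty: the bipartition is a b-coloring with 2 colors
      refine ⟨2, Sum.elim (fun _ => (0 : Fin 2)) (fun _ => 1), ?_, ?_⟩
      · rintro (i | i) (j | j) hadj
        · exact absurd hadj (bgraph_not_adj_ll t i j)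
        · simp
        · simp
        · exact absurd hadj (bgraph_not_adj_rr t i j)
      · intro c
        fin_cases c
        · refine ⟨Sum.inl last, rfl, ?_⟩
          intro j hj
          have : j = 1 := by fin_cases j <;> simp_all
          exact ⟨Sum.inr last, hadj_last_r last, by simp [this]⟩
        · refine ⟨Sum.inr last, rfl, ?_⟩
          intro j hj
          have : j = 0 := by fin_cases j <;> simp_all
          exact ⟨Sum.inl last, ((Bgraph t).adj_symm (hadj_last_r last)), by simp [this]⟩
    · rintro k ⟨C, hC⟩
      by_contra hk
      push_neg at hk
      -- k ≥ 3
      set d := C (Sum.inl last) with hd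
      set e := C (Sum.inr last) with he
      have hde : d ≠ e := hC.1 _ _ (hadj_last_r last)
      have hR : ∀ j : Fin t, C (Sum.inr j) ≠ d :=
        fun j => fun hcontra => (hC.1 _ _ (hadj_last_r j)) hcontra.symm
      have hL : ∀ i : Fin t, C (Sum.inl i) ≠ e :=
        fun i => hC.1 _ _ (hadj_l_last i)
      -- a third color f exists
      obtain ⟨f, hfd, hfe⟩ : ∃ f : Fin k, f ≠ d ∧ f ≠ e := by
        by_contra hcon
        push_neg at hcon
        have hsub : (Finset.univ : Finset (Fin k)) ⊆ {d, e} := by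
          intro x _
          rcases eq_or_ne x d with rfl | hx
          · simp
          · simp [hcon x hx]
        have := Finset.card_le_card hsub
        have h2 : ({d, e} : Finset (Fin k)).card ≤ 2 :=
          (Finset.card_insert_le _ _).trans (by simp)
        simp only [Finset.card_univ, Fintype.card_fin] at this
        omega
      obtain ⟨v, hvf, hv⟩ := hC.2 f
      rcases v with m | m
      · obtain ⟨w, haw, hwd⟩ := hv d (Ne.symm hfd)
        rcases w with j | j
        · exact bgraph_not_adj_ll t m j haw
        · exact hR j hwd
      · obtain ⟨w, haw, hwe⟩ := hv e (Ne.symm hfe)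
        rcases w with j | j
        · exact hL j hwe
        · exact bgraph_not_adj_rr t m j haw
  -- the induced subgraph on vertices with index < 3
  refine ⟨{x : Fin t ⊕ Fin t | bIdx x < 3}, ?_⟩
  set s : Set (Fin t ⊕ Fin t) := {x : Fin t ⊕ Fin t | bIdx x < 3} with hs
  have hlb : 3 ≤ bChrom ((Bgraph t).induce s) := by
    have hfin : Finite ↥s := Subtype.finite
    apply le_csSup
    · exact ⟨Nat.card ↥s, fun k ⟨C, hC⟩ => bcoloring_le_card hC⟩
    · refine ⟨fun v => ⟨bIdx v.1, v.2⟩, ?_, ?_⟩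
      · rintro ⟨(i | i), hi⟩ ⟨(j | j), hj⟩ hadj
        · exact absurd hadj (bgraph_not_adj_ll t i j)
        · simp only [hs, Set.mem_setOf_eq, bIdx, Sum.elim_inl, Sum.elim_inr] at hi hj
          have hor := (bgraph_adj_lr t i j).mp hadj
          have hij : (i : ℕ) ≠ (j : ℕ) := by
            rcases hor with hne | ⟨rfl, hval⟩
            · exact fun hv => hne (Fin.ext hv)
            · omega
          simpa [bIdx, Fin.ext_iff] using hij
        · have hadj' := (Bgraph t).adj_symm hadj
          simp only [hs, Set.mem_setOf_eq, bIdx, Sum.elim_inl, Sum.elim_inr] at hi hj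
          have hor := (bgraph_adj_lr t j i).mp hadj'
          have hij : (i : ℕ) ≠ (j : ℕ) := by
            rcases hor with hne | ⟨rfl, hval⟩
            · exact fun hv => hne (Fin.ext hv.symm)
            · omega
          simpa [bIdx, Fin.ext_iff] using hij
        · exact absurd hadj (bgraph_not_adj_rr t i j)
      · intro c
        have hct : (c : ℕ) < t := by omega
        refine ⟨⟨Sum.inl ⟨(c : ℕ), hct⟩, by simpa [hs, bIdx] using c.isLt⟩,
          by simp [bIdx, Fin.ext_iff], ?_⟩
        intro j hj
        have hjt : (j : ℕ) < t := by omega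
        refine ⟨⟨Sum.inr ⟨(j : ℕ), hjt⟩, by simpa [hs, bIdx] using j.isLt⟩, ?_,
          by simp [bIdx, Fin.ext_iff]⟩
        have hadj : (Bgraph t).Adj (Sum.inl ⟨(c : ℕ), hct⟩) (Sum.inr ⟨(j : ℕ), hjt⟩) := by
          rw [bgraph_adj_lr]
          left
          intro hcontra
          apply hj
          apply Fin.ext
          have h' : (c : ℕ) = (j : ℕ) := by
            simpa [Fin.ext_iff] using hcontra
          omega
        exact hadj
  omega
end

section
/- Fix an integer t ≥ 2. For every integer p there exists an integer N = N(t,p) such that every b-monotone finite simple graph G that contains no induced subgraph isomorphic to the complete bipartite graph K_{t,t} and satisfies b(G) ≤ p also satisfies Γ(G) ≤ N. Equivalently, for each fixed t the family of K_{t,t}-free b-monotone graphs is (Γ,b)-bounded. -/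
open SimpleGraph

section Aux
open Finset


def ram : ℕ → ℕ → ℕ
  | 0, _ => 0
  | _ + 1, 0 => 0
  | a + 1, b + 1 => ram a (b + 1) + ram (a + 1) b + 1
  termination_by a b => (a, b)

lemma ram_succ (a b : ℕ) : ram (a+1) (b+1) = ram a (b+1) + ram (a+1) b + 1 := by
  rw [ram]

lemma ram_pos (a b : ℕ) : 0 < ram (a+1) (b+1) := by rw [ram_succ]; omega

lemma ramsey_spec {V : Type} (G : SimpleGraph V) :
    ∀ a b : ℕ, ∀ A : Finset V, ram a b ≤ A.card →
      (∃ K ⊆ A, K.card = a ∧ (K : Set V).Pairwise G.Adj) ∨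
      (∃ I ⊆ A, I.card = b ∧ ∀ x ∈ I, ∀ y ∈ I, ¬ G.Adj x y) := by
  classical
  intro a
  induction a with
  | zero => intro b A _; exact Or.inl ⟨∅, by simp, by simp, by simp⟩
  | succ a iha =>
    intro b
    induction b with
    | zero => intro A _; exact Or.inr ⟨∅, by simp, by simp, by simp⟩
    | succ b ihb =>
      intro A hA
      rw [ram_succ] at hA
      have hA0 : 0 < A.card := by omega
      obtain ⟨x, hx⟩ := Finset.card_pos.mp hA0
      set Nb := (A.erase x).filter (fun y => G.Adj x y) with hNb
      set Mb := (A.erase x).filter (fun y => ¬ G.Adj x y) with hMb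
      have hsplit : Nb.card + Mb.card = (A.erase x).card :=
        Finset.card_filter_add_card_filter_not _
      have hec : (A.erase x).card = A.card - 1 := Finset.card_erase_of_mem hx
      have hNbA : Nb ⊆ A := (Finset.filter_subset _ _).trans (Finset.erase_subset _ _)
      have hMbA : Mb ⊆ A := (Finset.filter_subset _ _).trans (Finset.erase_subset _ _)
      have hcase : ram a (b+1) ≤ Nb.card ∨ ram (a+1) b ≤ Mb.card := by omega
      rcases hcase with h | h
      · rcases iha (b+1) Nb h with ⟨K, hKs, hKc, hKp⟩ | ⟨I, hIs, hIc, hIp⟩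
        · left
          have hxK : x ∉ K := fun hxk =>
            (Finset.mem_erase.mp (Finset.mem_of_mem_filter _ (hKs hxk))).1 rfl
          have hadjK : ∀ y ∈ K, G.Adj x y := fun y hy =>
            (Finset.mem_filter.mp (hKs hy)).2
          refine ⟨insert x K, ?_, ?_, ?_⟩
          · intro y hy
            rcases Finset.mem_insert.mp hy with rfl | hy
            · exact hx
            · exact hNbA (hKs hy)
          · rw [Finset.card_insert_of_notMem hxK, hKc]
          · rw [Finset.coe_insert]
            refine Set.Pairwise.insert ?_ ?_
            · exact hKp
            · intro y hy _
              exact ⟨hadjK y hy, (hadjK y hy).symm⟩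
        · exact Or.inr ⟨I, hIs.trans hNbA, hIc, hIp⟩
      · rcases ihb Mb h with ⟨K, hKs, hKc, hKp⟩ | ⟨I, hIs, hIc, hIp⟩
        · exact Or.inl ⟨K, hKs.trans hMbA, hKc, hKp⟩
        · right
          have hxI : x ∉ I := fun hxi =>
            (Finset.mem_erase.mp (Finset.mem_of_mem_filter _ (hIs hxi))).1 rfl
          have hnadjI : ∀ y ∈ I, ¬ G.Adj x y := fun y hy =>
            (Finset.mem_filter.mp (hIs hy)).2
          refine ⟨insert x I, ?_, ?_, ?_⟩
          · intro y hy
            rcases Finset.mem_insert.mp hy with rfl | hy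
            · exact hx
            · exact hMbA (hIs hy)
          · rw [Finset.card_insert_of_notMem hxI, hIc]
          · intro u hu v hv hadj
            rcases Finset.mem_insert.mp hu with h1 | h1 <;>
              rcases Finset.mem_insert.mp hv with h2 | h2
            · exact G.irrefl (h1 ▸ h2 ▸ hadj)
            · exact hnadjI v h2 (h1 ▸ hadj)
            · exact hnadjI u h1 ((h2 ▸ hadj).symm)
            · exact hIp u h1 v h2 hadj


lemma dcount {V : Type} [DecidableEq V] (I : Finset V) (r : V → V → Prop) [DecidableRel r] :
    (∑ w ∈ I, (I.filter (fun c => r w c)).card) = ∑ w ∈ I, (I.filter (fun c => r c w)).card := by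
  simp only [Finset.card_filter]
  exact Finset.sum_comm

lemma exists_low_deg {V : Type} [DecidableEq V] (I : Finset V) (hne : I.Nonempty)
    (r : V → V → Prop) [DecidableRel r] (d : ℕ)
    (h : ∀ w ∈ I, (I.filter (fun c => r w c)).card ≤ d) :
    ∃ w ∈ I, (I.filter (fun c => r w c ∨ r c w)).card ≤ 2*d := by
  by_contra h'
  push_neg at h'
  have h1 : ∀ w ∈ I, (I.filter (fun c => r w c ∨ r c w)).card ≤
      (I.filter (fun c => r w c)).card + (I.filter (fun c => r c w)).card := by
    intro w _
    rw [Finset.filter_or]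
    exact Finset.card_union_le _ _
  have h2 : ∑ w ∈ I, (2*d+1) ≤ ∑ w ∈ I, (I.filter (fun c => r w c ∨ r c w)).card :=
    Finset.sum_le_sum (fun w hw => h' w hw)
  have h3 : ∑ w ∈ I, (I.filter (fun c => r w c ∨ r c w)).card ≤
      (∑ w ∈ I, (I.filter (fun c => r w c)).card) + ∑ w ∈ I, (I.filter (fun c => r c w)).card := by
    rw [← Finset.sum_add_distrib]
    exact Finset.sum_le_sum h1
  have h4 : (∑ w ∈ I, (I.filter (fun c => r w c)).card) ≤ ∑ w ∈ I, d :=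
    Finset.sum_le_sum h
  have h5 := dcount I r
  simp only [Finset.sum_const, smul_eq_mul] at h2 h4
  have hI0 : 0 < I.card := Finset.card_pos.mpr hne
  nlinarith

lemma greedyIndep {V : Type} [DecidableEq V] (r : V → V → Prop) [DecidableRel r] (d : ℕ) :
    ∀ (n : ℕ) (I : Finset V), (∀ w ∈ I, (I.filter (fun c => r w c)).card ≤ d) →
      n * (2*d+1) ≤ I.card →
      ∃ W ⊆ I, W.card = n ∧ ∀ x ∈ W, ∀ y ∈ W, x ≠ y → ¬ r x y := by
  intro n
  induction n with
  | zero => exact fun I _ _ => ⟨∅, by simp, by simp, by simp⟩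
  | succ n ih =>
    intro I hdeg hcard
    have hne : I.Nonempty := Finset.card_pos.mp (by nlinarith [Nat.succ_mul n (2*d+1)])
    obtain ⟨w₀, hw₀, hw₀deg⟩ := exists_low_deg I hne r d hdeg
    set B := I.filter (fun c => r w₀ c ∨ r c w₀) with hB
    set I' := (I.erase w₀) \ B with hI'
    have hI'sub : I' ⊆ I := (Finset.sdiff_subset).trans (Finset.erase_subset _ _)
    have hI'card : n * (2*d+1) ≤ I'.card := by
      have h1 : (I.erase w₀).card - B.card ≤ I'.card := Finset.le_card_sdiff _ _
      have hBc : B.card ≤ 2*d := hw₀deg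
      have hec := Finset.card_erase_of_mem hw₀
      obtain ⟨M, hM2, hMgoal⟩ : ∃ M, M + (2*d+1) ≤ I.card ∧ M = n*(2*d+1) :=
        ⟨n*(2*d+1), by calc n*(2*d+1) + (2*d+1) = (n+1)*(2*d+1) := by ring
                      _ ≤ I.card := hcard, rfl⟩
      rw [← hMgoal]
      omega
    have hdeg' : ∀ w ∈ I', (I'.filter (fun c => r w c)).card ≤ d := by
      intro w hw
      exact le_trans (Finset.card_le_card (Finset.filter_subset_filter _ hI'sub)) (hdeg w (hI'sub hw))
    obtain ⟨W, hWs, hWc, hWp⟩ := ih I' hdeg' hI'card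
    have hw₀W : w₀ ∉ W := fun hmem =>
      (Finset.mem_erase.mp (Finset.mem_sdiff.mp (hWs hmem)).1).1 rfl
    have hkey : ∀ y ∈ W, ¬ r w₀ y ∧ ¬ r y w₀ := by
      intro y hy
      have h1 := (Finset.mem_sdiff.mp (hWs hy)).2
      have h2 : y ∈ I := hI'sub (hWs hy)
      rw [hB, Finset.mem_filter] at h1
      push_neg at h1
      exact h1 h2
    refine ⟨insert w₀ W, ?_, ?_, ?_⟩
    · intro y hy
      rcases Finset.mem_insert.mp hy with rfl | hy
      · exact hw₀
      · exact hI'sub (hWs hy)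
    · rw [Finset.card_insert_of_notMem hw₀W, hWc]
    · intro x hx y hy hxy hr
      rcases Finset.mem_insert.mp hx with h1 | h1 <;>
        rcases Finset.mem_insert.mp hy with h2 | h2
      · exact hxy (h1.trans h2.symm)
      · exact (hkey y h2).1 (h1 ▸ hr)
      · exact (hkey x h1).2 (h2 ▸ hr)
      · exact hWp x h1 y h2 hxy hr

def RRa (p t : ℕ) : ℕ := ram (p+1) t
def dda (p t : ℕ) : ℕ := 2*(t-2)*(p+1)^2 + 1
def CCa (p t : ℕ) : ℕ := Nat.choose (dda p t) (t-1)
def PPa (p t : ℕ) : ℕ := 2*((p+1)^2 * (RRa p t * CCa p t) + (p+1)^2 + (p+1))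
def SSa (p t : ℕ) : ℕ := RRa p t * CCa p t + PPa p t / (2*(p+1)^2) + 1
def M1a (p t : ℕ) : ℕ := (p+1)*(2*(dda p t) - 1)
def NB (p t : ℕ) : ℕ := PPa p t + ram (p+1) (M1a p t)

lemma dda_pos (p t : ℕ) : 0 < dda p t := Nat.succ_pos _

lemma CCa_pos (p t : ℕ) (ht : 2 ≤ t) : 0 < CCa p t := by
  apply Nat.choose_pos
  unfold dda
  have h1 : 1 ≤ (p+1)^2 := Nat.one_le_pow _ _ (Nat.succ_pos p)
  have h2 : 2*(t-2)*1 ≤ 2*(t-2)*(p+1)^2 := Nat.mul_le_mul_left _ h1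
  omega

lemma RRa_pos (p t : ℕ) (ht : 2 ≤ t) : 0 < RRa p t := by
  obtain ⟨t', rfl⟩ : ∃ t', t = t' + 1 := ⟨t-1, by omega⟩
  exact ram_pos p t'

lemma PPa_pos (p t : ℕ) : 0 < PPa p t := by unfold PPa; positivity

-- arith1 : (t-2)*PPa ≤ dda*(PPa/(2*(p+1)^2)+1)
lemma arith1 (p t : ℕ) : (t-2) * PPa p t ≤ dda p t * (PPa p t / (2*(p+1)^2) + 1) := by
  set m2 := (p+1)^2 with hm2
  have hm2pos : 0 < 2*m2 := by positivity
  have hdm := Nat.div_add_mod (PPa p t) (2*m2)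
  have hmod : PPa p t % (2*m2) < 2*m2 := Nat.mod_lt _ hm2pos
  set q := PPa p t / (2*m2)
  have h1 : PPa p t ≤ 2*m2*q + 2*m2 := by omega
  calc (t-2) * PPa p t ≤ (t-2) * (2*m2*q + 2*m2) := Nat.mul_le_mul_left _ h1
  _ = (2*(t-2)*m2) * (q+1) := by ring
  _ ≤ dda p t * (q+1) := by
      apply Nat.mul_le_mul_right
      unfold dda
      rw [← hm2]
      omega

-- arith2 : (p+1)*(p+1)*(SSa - 1) + (p+1) ≤ PPa
lemma arith2 (p t : ℕ) : (p+1)*(p+1)*(SSa p t - 1) + (p+1) ≤ PPa p t := by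
  have hS : SSa p t - 1 = RRa p t * CCa p t + PPa p t / (2*(p+1)^2) := by
    simp only [SSa, Nat.add_sub_cancel]
  set q := PPa p t / (2*(p+1)^2) with hq
  have h1 : 2*((p+1)^2*q) ≤ PPa p t := by
    calc 2*((p+1)^2*q) = q*(2*(p+1)^2) := by ring
    _ ≤ PPa p t := by rw [hq]; exact Nat.div_mul_le_self _ _
  have h4 : PPa p t = 2*((p+1)^2 * (RRa p t * CCa p t)) + 2*(p+1)^2 + 2*(p+1) := by
    unfold PPa; ring
  have h5 : (p+1)*(p+1)*(SSa p t - 1) + (p+1)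
      = (p+1)^2*(RRa p t * CCa p t) + (p+1)^2*q + (p+1) := by rw [hS]; ring
  omega

lemma bcol_le_card {W : Type*} [Finite W] (H : SimpleGraph W) {j : ℕ} (C : W → Fin j)
    (h : IsBColoring H C) : j ≤ Nat.card W := by
  classical
  have key : ∀ i : Fin j, ∃ v, C v = i := fun i => ⟨(h.2 i).choose, (h.2 i).choose_spec.1⟩
  set f : Fin j → W := fun i => (key i).choose with hf
  have hfi : Function.Injective f := by
    intro i₁ i₂ he
    have h1 : C (f i₁) = i₁ := (key i₁).choose_spec
    have h2 : C (f i₂) = i₂ := (key i₂).choose_spec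
    rw [← h1, ← h2, he]
  calc j = Nat.card (Fin j) := by simp
  _ ≤ Nat.card W := Nat.card_le_card_of_injective f hfi

lemma le_bChrom {W : Type*} [Finite W] (H : SimpleGraph W) {j : ℕ} (C : W → Fin j)
    (h : IsBColoring H C) : j ≤ bChrom H :=
  le_csSup ⟨Nat.card W, fun _ hj' => bcol_le_card H hj'.choose hj'.choose_spec⟩ ⟨C, h⟩

lemma clique_bChrom {V : Type} (G : SimpleGraph V) (m : ℕ) (K : Finset V)
    (hc : K.card = m) (hcl : (K : Set V).Pairwise G.Adj) :
    ∃ C : ↥(K : Set V) → Fin m, IsBColoring (G.induce (K : Set V)) C := by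
  classical
  have hcard : Fintype.card ↥(K : Set V) = m := by
    rw [← hc]; exact Fintype.card_coe K
  have e : ↥(K : Set V) ≃ Fin m := Fintype.equivFinOfCardEq hcard
  refine ⟨e, ?_, ?_⟩
  · intro v w hadj he
    have : v = w := e.injective he
    subst this
    exact G.irrefl ((SimpleGraph.comap_adj).mp hadj)
  · intro i
    refine ⟨e.symm i, Equiv.apply_symm_apply e i, ?_⟩
    intro jj hjj
    refine ⟨e.symm jj, ?_, Equiv.apply_symm_apply e jj⟩
    show (G.induce (K : Set V)).Adj (e.symm i) (e.symm jj)
    rw [SimpleGraph.comap_adj]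
    have hne : (e.symm i : V) ≠ (e.symm jj : V) := by
      intro hh
      have h3 : e (e.symm i) = e (e.symm jj) := congrArg e (Subtype.ext hh)
      simp only [Equiv.apply_symm_apply] at h3
      exact hjj h3.symm
    exact hcl (e.symm i).2 (e.symm jj).2 hne

lemma ktt_embed {V : Type} (G : SimpleGraph V) (t : ℕ) (T B : Finset V)
    (hT : T.card = t) (hB : B.card = t)
    (hTind : ∀ x ∈ T, ∀ y ∈ T, ¬ G.Adj x y) (hBind : ∀ x ∈ B, ∀ y ∈ B, ¬ G.Adj x y)
    (hadj : ∀ x ∈ T, ∀ y ∈ B, G.Adj x y) :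
    Nonempty (completeBipartiteGraph (Fin t) (Fin t) ↪g G) := by
  classical
  have hTc : Fintype.card ↥T = t := by rw [← hT]; exact Fintype.card_coe T
  have hBc : Fintype.card ↥B = t := by rw [← hB]; exact Fintype.card_coe B
  set a : Fin t → V := fun i => ((Fintype.equivFinOfCardEq hTc).symm i : V) with ha
  set b : Fin t → V := fun i => ((Fintype.equivFinOfCardEq hBc).symm i : V) with hb
  have haT : ∀ i, a i ∈ T := fun i => ((Fintype.equivFinOfCardEq hTc).symm i).2
  have hbB : ∀ i, b i ∈ B := fun i => ((Fintype.equivFinOfCardEq hBc).symm i).2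
  have hai : Function.Injective a := fun i j h =>
    (Fintype.equivFinOfCardEq hTc).symm.injective (Subtype.ext h)
  have hbi : Function.Injective b := fun i j h =>
    (Fintype.equivFinOfCardEq hBc).symm.injective (Subtype.ext h)
  have hab : ∀ i j, a i ≠ b j := by
    intro i j he
    exact G.irrefl (he ▸ hadj _ (haT i) _ (hbB j))
  set f : Fin t ⊕ Fin t → V := Sum.elim a b with hfdef
  have hfi : Function.Injective f := by
    intro u v huv
    match u, v with
    | Sum.inl i, Sum.inl j => exact congrArg Sum.inl (hai huv)
    | Sum.inr i, Sum.inr j => exact congrArg Sum.inr (hbi huv)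
    | Sum.inl i, Sum.inr j => exact absurd huv (hab i j)
    | Sum.inr i, Sum.inl j => exact absurd huv.symm (hab j i)
  refine ⟨⟨⟨f, hfi⟩, ?_⟩⟩
  intro u v
  match u, v with
  | Sum.inl i, Sum.inl j =>
    simp only [completeBipartiteGraph, hfdef, Sum.elim_inl]
    constructor
    · intro h; exact absurd h (hTind _ (haT i) _ (haT j))
    · intro h; simp at h
  | Sum.inl i, Sum.inr j =>
    simp only [completeBipartiteGraph, hfdef, Sum.elim_inl, Sum.elim_inr]
    constructor
    · intro _; simp
    · intro _; exact hadj _ (haT i) _ (hbB j)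
  | Sum.inr i, Sum.inl j =>
    simp only [completeBipartiteGraph, hfdef, Sum.elim_inl, Sum.elim_inr]
    constructor
    · intro _; simp
    · intro _; exact (hadj _ (haT j) _ (hbB i)).symm
  | Sum.inr i, Sum.inr j =>
    simp only [completeBipartiteGraph, hfdef, Sum.elim_inr]
    constructor
    · intro h; exact absurd h (hBind _ (hbB i) _ (hbB j))
    · intro h; simp at h

lemma core {V : Type} (G : SimpleGraph V) (t p k : ℕ) (ht : 2 ≤ t)
    (hK : IsEmpty (completeBipartiteGraph (Fin t) (Fin t) ↪g G))
    (C : V → Fin k) (hC : IsGrundyColoring G C) (hk : NB p t ≤ k) :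
    ∃ (s : Set V) (C' : ↥s → Fin (p+1)), IsBColoring (G.induce s) C' := by
  classical
  by_cases hNC : ∃ K : Finset V, K.card = p+1 ∧ ((K : Set V)).Pairwise G.Adj
  · obtain ⟨K, hc, hcl⟩ := hNC
    exact ⟨(K : Set V), clique_bChrom G (p+1) K hc hcl⟩
  -- basic Grundy facts in ℕ-form
  set Cn : V → ℕ := fun v => (C v : ℕ) with hCn
  have hproper : ∀ v w, G.Adj v w → Cn v ≠ Cn w := fun v w hvw he =>
    hC.1 v w hvw (Fin.val_injective he)
  have hsurj : ∀ j, j < k → ∃ v, Cn v = j := by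
    intro j hj
    obtain ⟨v, hv⟩ := hC.2.1 ⟨j, hj⟩
    exact ⟨v, by show ((C v : ℕ)) = j; rw [hv]⟩
  have hwit : ∀ v, ∀ j, j < Cn v → ∃ y, G.Adj v y ∧ Cn y = j := by
    intro v j hj
    have hjk : j < k := lt_trans hj (C v).isLt
    obtain ⟨y, hy1, hy2⟩ := hC.2.2 v ⟨j, hjk⟩ (by rw [Fin.lt_def]; exact hj)
    exact ⟨y, hy1, by show ((C y : ℕ)) = j; rw [hy2]⟩
  have hPPk : PPa p t + ram (p+1) (M1a p t) ≤ k := hk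
  have hkpos : 0 < k := lt_of_lt_of_le (lt_of_lt_of_le (PPa_pos p t) (Nat.le_add_right _ _)) hPPk
  obtain ⟨v0, _⟩ := hsurj 0 hkpos
  have ramNoClique : ∀ (b : ℕ) (A : Finset V), ram (p+1) b ≤ A.card →
      ∃ I ⊆ A, I.card = b ∧ ∀ x ∈ I, ∀ y ∈ I, ¬ G.Adj x y := by
    intro b A hA
    rcases ramsey_spec G (p+1) b A hA with ⟨K, _, h2, h3⟩ | h
    · exact absurd ⟨K, h2, h3⟩ hNC
    · exact h
  -- the independent set of high-color vertices
  set M₀ := ram (p+1) (M1a p t) with hM₀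
  set xv : ℕ → V := fun r => if h : PPa p t + r < k then (hsurj _ h).choose else v0 with hxvdef
  have hxv : ∀ r, r < M₀ → Cn (xv r) = PPa p t + r := by
    intro r hr
    have h : PPa p t + r < k := by omega
    rw [hxvdef]
    simp only [dif_pos h]
    exact (hsurj _ h).choose_spec
  set A := (Finset.range M₀).image xv with hA
  have hAcard : A.card = M₀ := by
    rw [hA, Finset.card_image_of_injOn, Finset.card_range]
    intro r hr r' hr' he
    have h1 := hxv r (Finset.mem_range.mp (Finset.mem_coe.mp hr))
    have h2 := hxv r' (Finset.mem_range.mp (Finset.mem_coe.mp hr'))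
    rw [he] at h1
    omega
  obtain ⟨I, hIA, hIcard, hIind⟩ := ramNoClique (M1a p t) A (by rw [hAcard])
  have hIcol : ∀ x ∈ I, PPa p t ≤ Cn x ∧ Cn x < k := by
    intro x hx
    obtain ⟨r, hr, rfl⟩ := Finset.mem_image.mp (hIA hx)
    rw [hxv r (Finset.mem_range.mp hr)]
    have := Finset.mem_range.mp hr
    omega
  -- bad color sets
  set Bad : V → V → Finset ℕ := fun w c =>
    (Finset.range (PPa p t)).filter (fun g => ∀ y, Cn y = g → G.Adj w y → G.Adj c y) with hBadDef
  -- Step A: bounded out-degree of the bad digraph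
  have hout : ∀ w ∈ I, (I.filter (fun c => c ≠ w ∧ SSa p t ≤ (Bad w c).card)).card ≤ dda p t - 1 := by
    intro w hw
    by_contra hbig
    push_neg at hbig
    have hdd : dda p t ≤ (I.filter (fun c => c ≠ w ∧ SSa p t ≤ (Bad w c).card)).card := by
      have := dda_pos p t; omega
    obtain ⟨J, hJsub, hJcard⟩ := Finset.exists_subset_card_eq hdd
    have hJI : ∀ c ∈ J, c ∈ I ∧ c ≠ w ∧ SSa p t ≤ (Bad w c).card := by
      intro c hc
      have h1 := hJsub hc
      rw [Finset.mem_filter] at h1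
      exact ⟨h1.1, h1.2⟩
    have hswap : ∑ g ∈ Finset.range (PPa p t), (J.filter (fun c => g ∈ Bad w c)).card
        = ∑ c ∈ J, (Bad w c).card := by
      simp only [Finset.card_filter]
      rw [Finset.sum_comm]
      apply Finset.sum_congr rfl
      intro c _
      rw [← Finset.card_filter]
      have hsub : Bad w c ⊆ Finset.range (PPa p t) := Finset.filter_subset _ _
      rw [Finset.filter_mem_eq_inter, Finset.inter_eq_right.mpr hsub]
    have hlow : dda p t * SSa p t ≤ ∑ c ∈ J, (Bad w c).card := by
      calc dda p t * SSa p t = ∑ _c ∈ J, SSa p t := by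
            rw [Finset.sum_const, hJcard, smul_eq_mul]
      _ ≤ ∑ c ∈ J, (Bad w c).card := Finset.sum_le_sum (fun c hc => (hJI c hc).2.2)
    set H := (Finset.range (PPa p t)).filter
        (fun g => t-1 ≤ (J.filter (fun c => g ∈ Bad w c)).card) with hH
    have hsplit : ∑ g ∈ Finset.range (PPa p t), (J.filter (fun c => g ∈ Bad w c)).card
        ≤ H.card * dda p t + PPa p t * (t-2) := by
      rw [← Finset.sum_filter_add_sum_filter_not (Finset.range (PPa p t))
        (fun g => t-1 ≤ (J.filter (fun c => g ∈ Bad w c)).card)]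
      apply add_le_add
      · calc ∑ g ∈ H, (J.filter (fun c => g ∈ Bad w c)).card
            ≤ ∑ _g ∈ H, dda p t :=
              Finset.sum_le_sum (fun g _ => le_of_le_of_eq (Finset.card_filter_le _ _) hJcard)
        _ = H.card * dda p t := by rw [Finset.sum_const, smul_eq_mul]
      · calc ∑ g ∈ (Finset.range (PPa p t)).filter
              (fun g => ¬ (t-1 ≤ (J.filter (fun c => g ∈ Bad w c)).card)),
              (J.filter (fun c => g ∈ Bad w c)).card
            ≤ ∑ _g ∈ (Finset.range (PPa p t)).filter
              (fun g => ¬ (t-1 ≤ (J.filter (fun c => g ∈ Bad w c)).card)), (t-2) := by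
              apply Finset.sum_le_sum
              intro g hg
              have := (Finset.mem_filter.mp hg).2
              omega
        _ ≤ PPa p t * (t-2) := by
              rw [Finset.sum_const, smul_eq_mul]
              apply Nat.mul_le_mul_right
              exact le_of_le_of_eq (Finset.card_filter_le _ _) (Finset.card_range _)
    have hHcard : RRa p t * CCa p t ≤ H.card := by
      have ha1 := arith1 p t
      have hsplit2 : dda p t * SSa p t
          = dda p t * (RRa p t * CCa p t) + dda p t * (PPa p t/(2*(p+1)^2) + 1) := by
        simp only [SSa]; ring
      have hcomm : PPa p t * (t-2) = (t-2) * PPa p t := Nat.mul_comm _ _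
      have hstep : dda p t * (RRa p t * CCa p t) ≤ H.card * dda p t := by omega
      rw [Nat.mul_comm (H.card) (dda p t)] at hstep
      exact Nat.le_of_mul_le_mul_left hstep (dda_pos p t)
    have hTg : ∀ g ∈ H, ∃ Tg, Tg ⊆ J.filter (fun c => g ∈ Bad w c) ∧ Tg.card = t-1 := by
      intro g hg
      rw [hH, Finset.mem_filter] at hg
      exact Finset.exists_subset_card_eq hg.2
    set Tmap : ℕ → Finset V := fun g => if h : g ∈ H then (hTg g h).choose else ∅ with hTmap
    have hTmapsub : ∀ g ∈ H, Tmap g ⊆ J.filter (fun c => g ∈ Bad w c) ∧ (Tmap g).card = t-1 := by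
      intro g hg
      rw [hTmap]
      simp only [dif_pos hg]
      exact (hTg g hg).choose_spec
    have hmapsTo : ∀ g ∈ H, Tmap g ∈ J.powersetCard (t-1) := by
      intro g hg
      rw [Finset.mem_powersetCard]
      exact ⟨(hTmapsub g hg).1.trans (Finset.filter_subset _ _), (hTmapsub g hg).2⟩
    have hcount : (J.powersetCard (t-1)).card * (RRa p t - 1) < H.card := by
      rw [Finset.card_powersetCard, hJcard]
      have hR := RRa_pos p t ht
      have hCCpos := CCa_pos p t ht
      have hCC : Nat.choose (dda p t) (t-1) = CCa p t := rfl
      rw [hCC]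
      obtain ⟨R', hR'⟩ : ∃ R', RRa p t = R' + 1 := ⟨RRa p t - 1, by omega⟩
      have heq : CCa p t * (RRa p t - 1) + CCa p t = RRa p t * CCa p t := by
        rw [hR']; simp only [Nat.add_sub_cancel]; ring
      omega
    obtain ⟨T₀, hT₀mem, hT₀fib⟩ :=
      Finset.exists_lt_card_fiber_of_mul_lt_card_of_maps_to hmapsTo hcount
    set H₀ := H.filter (fun g => Tmap g = T₀) with hH₀
    have hH₀card : RRa p t ≤ H₀.card := by
      have hR := RRa_pos p t ht
      omega
    have hwcol := hIcol w hw
    have hywit : ∀ g ∈ H₀, ∃ y, G.Adj w y ∧ Cn y = g := by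
      intro g hg
      have hgH : g ∈ H := Finset.mem_of_mem_filter _ hg
      have hgP : g < PPa p t := Finset.mem_range.mp (Finset.mem_of_mem_filter _ hgH)
      exact hwit w g (lt_of_lt_of_le hgP hwcol.1)
    set yv : ℕ → V := fun g => if h : g ∈ H₀ then (hywit g h).choose else v0 with hyv
    have hyspec : ∀ g ∈ H₀, G.Adj w (yv g) ∧ Cn (yv g) = g := by
      intro g hg
      rw [hyv]
      simp only [dif_pos hg]
      exact (hywit g hg).choose_spec
    have hyadjT : ∀ g ∈ H₀, ∀ c ∈ T₀, G.Adj c (yv g) := by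
      intro g hg c hc
      have h1 : Tmap g = T₀ := (Finset.mem_filter.mp hg).2
      have h2 : c ∈ Tmap g := by rw [h1]; exact hc
      have hgH : g ∈ H := Finset.mem_of_mem_filter _ hg
      have h3 := (hTmapsub g hgH).1 h2
      have h4 : g ∈ Bad w c := (Finset.mem_filter.mp h3).2
      have h5 : ∀ y, Cn y = g → G.Adj w y → G.Adj c y := by
        rw [hBadDef] at h4
        exact (Finset.mem_filter.mp h4).2
      exact h5 _ (hyspec g hg).2 (hyspec g hg).1
    set Y := H₀.image yv with hY
    have hYcard : RRa p t ≤ Y.card := by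
      rw [hY, Finset.card_image_of_injOn]
      · exact hH₀card
      · intro g hg g' hg' he
        have h1 := (hyspec g (Finset.mem_coe.mp hg)).2
        have h2 := (hyspec g' (Finset.mem_coe.mp hg')).2
        rw [he] at h1
        rw [h1] at h2
        exact h2
    set T' := insert w T₀ with hT'
    have hT₀J : T₀ ⊆ J := (Finset.mem_powersetCard.mp hT₀mem).1
    have hT₀card : T₀.card = t-1 := (Finset.mem_powersetCard.mp hT₀mem).2
    have hwT₀ : w ∉ T₀ := fun hmem => ((hJI w (hT₀J hmem)).2.1 rfl)
    have hT'card : T'.card = t := by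
      rw [hT', Finset.card_insert_of_notMem hwT₀, hT₀card]
      omega
    have hT'I : ∀ x ∈ T', x ∈ I := by
      intro x hx
      rcases Finset.mem_insert.mp hx with rfl | hx
      · exact hw
      · exact (hJI x (hT₀J hx)).1
    have hT'ind : ∀ x ∈ T', ∀ y ∈ T', ¬ G.Adj x y :=
      fun x hx y hy => hIind x (hT'I x hx) y (hT'I y hy)
    obtain ⟨B, hBY, hBcard, hBind⟩ := ramNoClique t Y hYcard
    have hadjTB : ∀ x ∈ T', ∀ y ∈ B, G.Adj x y := by
      intro x hx y hy
      obtain ⟨g, hg, rfl⟩ := Finset.mem_image.mp (hBY hy)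
      rcases Finset.mem_insert.mp hx with rfl | hx
      · exact (hyspec g hg).1
      · exact hyadjT g hg x hx
    obtain ⟨e⟩ := ktt_embed G t T' B hT'card hBcard hT'ind hBind hadjTB
    exact hK.false e
  -- Step B: select pairwise-good centers
  have hM1eq : (p+1)*(2*(dda p t - 1)+1) = M1a p t := by
    have h1 : 2*(dda p t - 1)+1 = 2*(dda p t)-1 := by
      have := dda_pos p t; omega
    rw [h1]; rfl
  obtain ⟨W, hWI, hWcard, hWgood⟩ := greedyIndep
    (fun w c => c ≠ w ∧ SSa p t ≤ (Bad w c).card) (dda p t - 1) (p+1) I hout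
    (by rw [hM1eq, hIcard])
  set eW := Fintype.equivFinOfCardEq
    (show Fintype.card ↥W = p+1 by rw [Fintype.card_coe, hWcard]) with heW
  set wv : Fin (p+1) → V := fun i => ↑(eW.symm i) with hwv
  have hwvmem : ∀ i, wv i ∈ W := fun i => (eW.symm i).2
  have hwvinj : Function.Injective wv := fun i j h => by
    have := eW.symm.injective (Subtype.ext h)
    exact this
  have hwcolP : ∀ i, PPa p t ≤ Cn (wv i) := fun i => (hIcol _ (hWI (hwvmem i))).1
  have hwnadj : ∀ i j, ¬ G.Adj (wv i) (wv j) :=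
    fun i j => hIind _ (hWI (hwvmem i)) _ (hWI (hwvmem j))
  have hwbad : ∀ i j, i ≠ j → (Bad (wv i) (wv j)).card < SSa p t := by
    intro i j hij
    have hne : wv j ≠ wv i := fun h => hij (hwvinj h).symm
    have hg := hWgood (wv i) (hwvmem i) (wv j) (hwvmem j) (fun h => hij (hwvinj h))
    by_contra hge
    push_neg at hge
    exact hg ⟨hne, hge⟩
  -- good colors
  set badU := (Finset.univ : Finset (Fin (p+1) × Fin (p+1))).biUnion
      (fun q => if q.1 = q.2 then (∅ : Finset ℕ) else Bad (wv q.1) (wv q.2)) with hbadU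
  have hbadUcard : badU.card ≤ (p+1)*(p+1)*(SSa p t - 1) := by
    calc badU.card
        ≤ ∑ q ∈ (Finset.univ : Finset (Fin (p+1) × Fin (p+1))),
            (if q.1 = q.2 then (∅ : Finset ℕ) else Bad (wv q.1) (wv q.2)).card :=
          Finset.card_biUnion_le
    _ ≤ ∑ _q ∈ (Finset.univ : Finset (Fin (p+1) × Fin (p+1))), (SSa p t - 1) := by
        apply Finset.sum_le_sum
        intro q _
        by_cases hq : q.1 = q.2
        · rw [if_pos hq]; simp
        · rw [if_neg hq]
          have := hwbad q.1 q.2 hq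
          omega
    _ = (p+1)*(p+1)*(SSa p t - 1) := by
        rw [Finset.sum_const, smul_eq_mul, Finset.card_univ, Fintype.card_prod,
          Fintype.card_fin]
  set goodC := (Finset.range (PPa p t)) \ badU with hgoodC
  have hgoodcard : p+1 ≤ goodC.card := by
    have h1 : (Finset.range (PPa p t)).card - badU.card ≤ goodC.card :=
      Finset.le_card_sdiff _ _
    rw [Finset.card_range] at h1
    have h2 := arith2 p t
    omega
  obtain ⟨gset, hgsub, hgcard⟩ := Finset.exists_subset_card_eq hgoodcard
  set eg := Fintype.equivFinOfCardEq
    (show Fintype.card ↥gset = p+1 by rw [Fintype.card_coe, hgcard]) with heg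
  set gv : Fin (p+1) → ℕ := fun c => ↑(eg.symm c) with hgv
  have hgvmem : ∀ c, gv c ∈ goodC := fun c => hgsub (eg.symm c).2
  have hgvinj : Function.Injective gv := fun i j h => eg.symm.injective (Subtype.ext h)
  have hgvlt : ∀ c, gv c < PPa p t :=
    fun c => Finset.mem_range.mp (Finset.mem_sdiff.mp (hgvmem c)).1
  have hgvnb : ∀ c, gv c ∉ badU := fun c => (Finset.mem_sdiff.mp (hgvmem c)).2
  -- leaves
  have hlv : ∀ i c : Fin (p+1), i ≠ c →
      ∃ y, Cn y = gv c ∧ G.Adj (wv i) y ∧ ¬ G.Adj (wv c) y := by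
    intro i c hic
    have h1 : gv c ∉ Bad (wv i) (wv c) := by
      intro hmem
      apply hgvnb c
      rw [hbadU]
      apply Finset.mem_biUnion.mpr
      refine ⟨(i,c), Finset.mem_univ _, ?_⟩
      have hne : ¬ ((i,c).1 = (i,c).2) := hic
      rw [if_neg hne]
      exact hmem
    rw [hBadDef, Finset.mem_filter] at h1
    push_neg at h1
    exact h1 (Finset.mem_range.mpr (hgvlt c))
  set lv : Fin (p+1) → Fin (p+1) → V :=
    fun i c => if h : i ≠ c then (hlv i c h).choose else v0 with hlvdef
  have hlvspec : ∀ i c (h : i ≠ c),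
      Cn (lv i c) = gv c ∧ G.Adj (wv i) (lv i c) ∧ ¬ G.Adj (wv c) (lv i c) := by
    intro i c h
    rw [hlvdef]
    simp only [dif_pos h]
    exact (hlv i c h).choose_spec
  -- the coloring
  have hwv_not_g : ∀ c c' : Fin (p+1), Cn (wv c) ≠ gv c' := by
    intro c c' he
    have h1 := hwcolP c
    have h2 := hgvlt c'
    omega
  set i0 : Fin (p+1) := ⟨0, Nat.succ_pos p⟩ with hi0
  set col : V → Fin (p+1) := fun v =>
    if h : ∃ c, Cn v = gv c then h.choose
    else if h2 : ∃ c, v = wv c then h2.choose else i0 with hcol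
  have colw : ∀ c, col (wv c) = c := by
    intro c
    rw [hcol]
    have h1 : ¬ ∃ c', Cn (wv c) = gv c' := fun ⟨c', hc'⟩ => hwv_not_g c c' hc'
    simp only [dif_neg h1]
    have h2 : ∃ c', wv c = wv c' := ⟨c, rfl⟩
    simp only [dif_pos h2]
    exact (hwvinj h2.choose_spec).symm
  have coll : ∀ i c, i ≠ c → col (lv i c) = c := by
    intro i c hic
    rw [hcol]
    have h1 : ∃ c', Cn (lv i c) = gv c' := ⟨c, (hlvspec i c hic).1⟩
    simp only [dif_pos h1]
    apply hgvinj
    rw [← h1.choose_spec, (hlvspec i c hic).1]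
  refine ⟨{v | (∃ c, v = wv c) ∨ ∃ i c, i ≠ c ∧ v = lv i c}, fun x => col ↑x, ?_, ?_⟩
  · -- proper
    intro x y hadj heq
    have hadj2 : G.Adj (x : V) (y : V) := hadj
    have hclass : ∀ v : ↥{v | (∃ c, v = wv c) ∨ ∃ i c, i ≠ c ∧ v = lv i c},
        col ↑v = col ↑x →
        ((v : V) = wv (col ↑x)) ∨ ∃ i, i ≠ col ↑x ∧ (v : V) = lv i (col ↑x) := by
      intro v hv
      rcases v.2 with ⟨c, hc⟩ | ⟨i, c, hic, hc⟩
      · left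
        rw [hc]
        congr 1
        rw [← hv, hc, colw]
      · right
        have hcc : c = col ↑x := by rw [← hv, hc, coll i c hic]
        exact ⟨i, hcc ▸ hic, by rw [hc, hcc]⟩
    rcases hclass x rfl with hx1 | ⟨i, hi, hx1⟩ <;>
      rcases hclass y heq.symm with hy1 | ⟨i', hi', hy1⟩
    · rw [hx1, hy1] at hadj2
      exact G.loopless.irrefl _ hadj2
    · rw [hx1, hy1] at hadj2
      exact (hlvspec i' _ hi').2.2 hadj2
    · rw [hx1, hy1] at hadj2
      exact (hlvspec i _ hi).2.2 hadj2.symm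
    · rw [hx1, hy1] at hadj2
      have h1 := (hlvspec i _ hi).1
      have h2 := (hlvspec i' _ hi').1
      exact hproper _ _ hadj2 (by rw [h1, h2])
  · -- domination
    intro c
    have hmemw : (wv c) ∈ {v | (∃ c, v = wv c) ∨ ∃ i c, i ≠ c ∧ v = lv i c} :=
      Or.inl ⟨c, rfl⟩
    refine ⟨⟨wv c, hmemw⟩, colw c, ?_⟩
    intro c' hcc'
    have hne : c ≠ c' := fun h => hcc' h.symm
    have hmeml : (lv c c') ∈ {v | (∃ c, v = wv c) ∨ ∃ i c, i ≠ c ∧ v = lv i c} :=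
      Or.inr ⟨c, c', hne, rfl⟩
    exact ⟨⟨lv c c', hmeml⟩, (hlvspec c c' hne).2.1, coll c c' hne⟩

end Aux

/-- Fix `t ≥ 2`. For every `p` there is `N` such that every b-monotone finite simple graph
`G` with no induced subgraph isomorphic to `K_{t,t}` and with `b(G) ≤ p` satisfies
`Γ(G) ≤ N`; i.e. the family of `K_{t,t}`-free b-monotone graphs is `(Γ, b)`-bounded. -/
theorem stmt14 (t : ℕ) (ht : 2 ≤ t) (p : ℕ) :
    ∃ N : ℕ, ∀ (V : Type) [Fintype V] (G : SimpleGraph V),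
      (∀ s : Set V, bChrom (G.induce s) ≤ bChrom G) →
      IsEmpty (completeBipartiteGraph (Fin t) (Fin t) ↪g G) →
      bChrom G ≤ p → grundyNum G ≤ N := by
  refine ⟨NB p t, ?_⟩
  intro V _ G hmono hK hb
  apply csSup_le'
  intro k hkmem
  by_contra hgt
  push_neg at hgt
  obtain ⟨C, hC⟩ := hkmem
  obtain ⟨s, C', hbc⟩ := core G t p k ht hK C hC (le_of_lt hgt)
  have h1 : p+1 ≤ bChrom (G.induce s) := le_bChrom _ C' hbc
  have h2 := hmono s
  omega
end

section
/- For every finite simple graph G with at least one vertex, b(G) ≤ m(G). -/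
open SimpleGraph

/-- Every finite simple graph `G` with at least one vertex satisfies `b(G) ≤ m(G)`. -/
theorem stmt15 {V : Type*} [Fintype V] [Nonempty V] (G : SimpleGraph V) :
    bChrom G ≤ mParam G := by
  classical
  apply csSup_le'
  rintro k ⟨C, hprop, hb⟩
  -- pick a b-vertex in each class
  choose f hf hbf using hb
  have hfinj : Function.Injective f := fun i j hij => by
    rw [← hf i, ← hf j, hij]
  set s : Finset V := Finset.image f Finset.univ with hs
  have hcard : s.card = k := by
    rw [hs, Finset.card_image_of_injective _ hfinj, Finset.card_univ, Fintype.card_fin]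
  have hdeg : ∀ v ∈ s, k - 1 ≤ vdeg G v := by
    intro v hv
    rw [hs, Finset.mem_image] at hv
    obtain ⟨i, -, rfl⟩ := hv
    choose g hg hCg using hbf i
    have hginj : Function.Injective
        (fun j : {j : Fin k // j ≠ i} => (⟨g j.1 j.2, hg j.1 j.2⟩ : {w // G.Adj (f i) w})) := by
      rintro ⟨a, ha⟩ ⟨b, hb'⟩ hab
      simp only [Subtype.mk.injEq] at hab ⊢
      rw [← hCg a ha, ← hCg b hb', hab]
    have hle : Nat.card {j : Fin k // j ≠ i} ≤ Nat.card {w // G.Adj (f i) w} :=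
      Nat.card_le_card_of_injective _ hginj
    have hcard2 : Nat.card {j : Fin k // j ≠ i} = k - 1 := by
      rw [Nat.card_eq_fintype_card]
      have : Fintype.card {j : Fin k // j ≠ i} = Fintype.card (Fin k) - 1 := by
        rw [← Fintype.card_subtype_eq i]
        exact Fintype.card_subtype_compl _
      simpa using this
    rw [vdeg, ← hcard2]
    exact hle
  have hmem : k ∈ {k | ∃ s : Finset V, s.card = k ∧ ∀ v ∈ s, k - 1 ≤ vdeg G v} :=
    ⟨s, hcard, hdeg⟩
  have hbdd : BddAbove {k | ∃ s : Finset V, s.card = k ∧ ∀ v ∈ s, k - 1 ≤ vdeg G v} := by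
    refine ⟨Fintype.card V, ?_⟩
    rintro n ⟨t, ht, -⟩
    rw [← ht]
    exact Finset.card_le_univ t
  exact le_csSup hbdd hmem
end

section
/- For every finite tree T (a finite connected acyclic simple graph) with at least one vertex, b(T) ≥ m(T) − 1. -/
open SimpleGraph

section Stmt16Aux

open Finset

set_option linter.unusedSectionVars false
set_option linter.unusedVariables false
set_option maxHeartbeats 1000000
attribute [local instance] Classical.propDecidable

namespace Stmt16

variable {V : Type*} [Fintype V] {T : SimpleGraph V}

lemma paths_eq (hT : T.IsTree) {u v : V} {p q : T.Walk u v} (hp : p.IsPath) (hq : q.IsPath) :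
    p = q := ((hT.existsUnique_path u v).unique hp hq)

lemma path_length (hT : T.IsTree) {v w : V} {p : T.Walk v w} (hp : p.IsPath) :
    p.length = T.dist v w := by
  classical
  refine le_antisymm ?_ (SimpleGraph.dist_le p)
  obtain ⟨q, hq⟩ := (hT.isConnected v w).exists_walk_length_eq_dist
  calc p.length = q.bypass.length := by rw [paths_eq hT hp q.bypass_isPath]
    _ ≤ q.length := q.length_bypass_le
    _ = _ := hq

lemma adj_cases (hT : T.IsTree) (r : V) {u v : V} (h : T.Adj u v) :
    T.dist u r = T.dist v r + 1 ∨ T.dist v r = T.dist u r + 1 := by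
  classical
  obtain ⟨Q, hQ⟩ := (hT.existsUnique_path v r)
  by_cases hu : u ∈ Q.support
  · right
    have h1 : (Q.takeUntil u hu).IsPath := hQ.1.takeUntil hu
    have h2 : (Q.dropUntil u hu).IsPath := hQ.1.dropUntil hu
    have e1 : (Q.takeUntil u hu).length = T.dist v u := path_length hT h1
    have e2 : (Q.dropUntil u hu).length = T.dist u r := path_length hT h2
    have e3 : Q.length = T.dist v r := path_length hT hQ.1
    have e4 : T.dist v u = 1 := by
      rw [← e1]
      have : (Q.takeUntil u hu) = Walk.cons h.symm Walk.nil := by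
        refine paths_eq hT h1 ?_
        simp [Walk.isPath_def, h.symm.ne]
      rw [this]; simp
    have : (Q.takeUntil u hu).length + (Q.dropUntil u hu).length = Q.length := by
      conv_rhs => rw [← Q.take_spec hu]
      rw [Walk.length_append]
    omega
  · left
    have hp : (Walk.cons h Q).IsPath := hQ.1.cons hu
    have := path_length hT hp
    simp only [Walk.length_cons] at this
    rw [path_length hT hQ.1] at this
    omega

lemma dist_pos_of_ne (hT : T.IsTree) {v r : V} (h : v ≠ r) : 0 < T.dist v r :=
  (hT.isConnected v r).pos_dist_of_ne h

lemma parent_exists (hT : T.IsTree) {v r : V} (h : v ≠ r) :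
    ∃ p, T.Adj v p ∧ T.dist p r + 1 = T.dist v r := by
  obtain ⟨Q, hQ⟩ := (hT.existsUnique_path v r)
  cases Q with
  | nil => exact absurd rfl h
  | cons hadj q =>
    rename_i u
    refine ⟨u, hadj, ?_⟩
    have h1 : q.IsPath := hQ.1.of_cons
    have := path_length hT h1
    have := path_length hT hQ.1
    simp only [Walk.length_cons] at *
    omega

lemma parent_unique (hT : T.IsTree) {v r p q : V} (h1 : T.Adj v p)
    (h2 : T.dist p r + 1 = T.dist v r) (h3 : T.Adj v q) (h4 : T.dist q r + 1 = T.dist v r) :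
    p = q := by
  classical
  obtain ⟨P, hP⟩ := (hT.existsUnique_path p r)
  obtain ⟨Q, hQ⟩ := (hT.existsUnique_path q r)
  have hvP : v ∉ P.support := by
    intro hv
    have := path_length hT (hP.1.dropUntil hv)
    have h5 : (P.takeUntil v hv).length + (P.dropUntil v hv).length = P.length := by
      conv_rhs => rw [← P.take_spec hv]; rw [Walk.length_append]
    have := path_length hT hP.1
    omega
  have hvQ : v ∉ Q.support := by
    intro hv
    have := path_length hT (hQ.1.dropUntil hv)
    have h5 : (Q.takeUntil v hv).length + (Q.dropUntil v hv).length = Q.length := by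
      conv_rhs => rw [← Q.take_spec hv]; rw [Walk.length_append]
    have := path_length hT hQ.1
    omega
  have e : Walk.cons h1 P = Walk.cons h3 Q := paths_eq hT (hP.1.cons hvP) (hQ.1.cons hvQ)
  have := congrArg (fun w => w.getVert 1) e
  simpa using this

lemma no_triangle (hT : T.IsTree) {a b c : V} (h1 : T.Adj a b) (h2 : T.Adj b c)
    (h3 : T.Adj a c) : False := by
  have p1 : (Walk.cons h1 (Walk.cons h2 Walk.nil) : T.Walk a c).IsPath := by
    simp [Walk.isPath_def, h1.ne, h2.ne, h3.ne]
  have p2 : (Walk.cons h3 Walk.nil : T.Walk a c).IsPath := by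
    simp [Walk.isPath_def, h3.ne]
  have := congrArg Walk.length (paths_eq hT p1 p2)
  simp at this

lemma no_c4 (hT : T.IsTree) {u w x x' : V} (hx : T.Adj u x) (hxw : T.Adj x w)
    (hx' : T.Adj u x') (hx'w : T.Adj x' w) (hxx : x ≠ x') (huw : u ≠ w) : False := by
  have p1 : (Walk.cons hx (Walk.cons hxw Walk.nil) : T.Walk u w).IsPath := by
    simp [Walk.isPath_def, hx.ne, hxw.ne, huw]
  have p2 : (Walk.cons hx' (Walk.cons hx'w Walk.nil) : T.Walk u w).IsPath := by
    simp [Walk.isPath_def, hx'.ne, hx'w.ne, huw]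
  have := congrArg (fun z => z.getVert 1) (paths_eq hT p1 p2)
  simp at this
  exact hxx this

end Stmt16

namespace Stmt16
variable {V : Type*} [Fintype V] {T : SimpleGraph V}

lemma vdeg_eq (v : V) : vdeg T v = T.degree v := by
  rw [vdeg, ← SimpleGraph.card_neighborSet_eq_degree, ← Nat.card_eq_fintype_card]
  rfl

lemma le_bChrom {k : ℕ} (h : ∃ C : V → Fin k, IsBColoring T C) : k ≤ bChrom T := by
  have hb : BddAbove {k | ∃ C : V → Fin k, IsBColoring T C} := by
    refine ⟨Fintype.card V, ?_⟩
    rintro k' ⟨C, hC⟩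
    have hex : ∀ i : Fin k', ∃ v, C v = i := fun i => ⟨(hC.2 i).choose, (hC.2 i).choose_spec.1⟩
    choose g hg using hex
    have hinj : Function.Injective g := fun a b hab => by rw [← hg a, ← hg b, hab]
    calc k' = Fintype.card (Fin k') := (Fintype.card_fin k').symm
      _ ≤ Fintype.card V := Fintype.card_le_of_injective g hinj
  exact le_csSup hb h

lemma two_coloring [Nonempty V] (hT : T.IsTree) (hE : ∃ a b : V, T.Adj a b) :
    ∃ C : V → Fin 2, IsBColoring T C := by
  obtain ⟨a, b, hab⟩ := hE
  set r : V := Classical.arbitrary V with hr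
  refine ⟨fun v => ⟨T.dist v r % 2, Nat.mod_lt _ (by omega)⟩, ?_, ?_⟩
  · intro v w hvw heq
    have h2 := adj_cases hT r hvw
    have h3 : T.dist v r % 2 = T.dist w r % 2 := congrArg Fin.val heq
    omega
  · intro i
    have hab2 := adj_cases hT r hab
    have hne : (T.dist a r : ℕ) % 2 ≠ T.dist b r % 2 := by omega
    by_cases hia : (i : ℕ) = T.dist a r % 2
    · refine ⟨a, by ext; simpa using hia.symm, ?_⟩
      intro j hj
      refine ⟨b, hab, ?_⟩
      ext
      simp only
      have hj2 : (j : ℕ) ≠ (i : ℕ) := fun hc => hj (Fin.ext hc)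
      have := j.isLt; have := i.isLt
      omega
    · refine ⟨b, ?_, ?_⟩
      · ext; simp only
        have := i.isLt
        omega
      · intro j hj
        refine ⟨a, hab.symm, ?_⟩
        ext; simp only
        have hj2 : (j : ℕ) ≠ (i : ℕ) := fun hc => hj (Fin.ext hc)
        have := j.isLt; have := i.isLt
        omega

/-- the swap reduction: get a dense set such that no outside vertex is adjacent to all of it -/
lemma swap_lemma (hT : T.IsTree) {k : ℕ} (hk : 2 ≤ k) (s0 : Finset V)
    (hcard : s0.card = k) (hdeg : ∀ v ∈ s0, k ≤ T.degree v) :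
    ∃ D : Finset V, D.card = k ∧ (∀ v ∈ D, k ≤ T.degree v) ∧
      (∀ v, v ∉ D → ∃ w ∈ D, ¬ T.Adj v w) := by
  by_cases hstar : ∀ v, v ∉ s0 → ∃ w ∈ s0, ¬ T.Adj v w
  · exact ⟨s0, hcard, hdeg, hstar⟩
  · push_neg at hstar
    obtain ⟨v', hv's, hv'⟩ := hstar
    obtain ⟨w₀, hw₀⟩ := Finset.card_pos.1 (by omega : 0 < s0.card)
    refine ⟨insert v' (s0.erase w₀), ?_, ?_, ?_⟩
    · rw [Finset.card_insert_of_notMem (fun hc => hv's (Finset.erase_subset _ _ hc)),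
        Finset.card_erase_of_mem hw₀, hcard]
      omega
    · intro v hv
      rcases Finset.mem_insert.1 hv with rfl | hv2
      · -- v' adjacent to all of s0
        have hsub : s0 ⊆ T.neighborFinset v := by
          intro w hw
          rw [SimpleGraph.mem_neighborFinset]
          exact hv' w hw
        calc k = s0.card := hcard.symm
          _ ≤ (T.neighborFinset v).card := Finset.card_le_card hsub
          _ = T.degree v := rfl
      · exact hdeg v (Finset.erase_subset _ _ hv2)
    · intro v hv
      by_contra hc
      push_neg at hc
      have hvv' : T.Adj v v' := hc v' (Finset.mem_insert_self _ _)
      obtain ⟨w₁, hw₁⟩ : ∃ w₁, w₁ ∈ s0.erase w₀ := by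
        apply Finset.card_pos.1
        rw [Finset.card_erase_of_mem hw₀, hcard]
        omega
      have hvw₁ : T.Adj v w₁ := hc w₁ (Finset.mem_insert_of_mem hw₁)
      have hv'w₁ : T.Adj v' w₁ := hv' w₁ (Finset.erase_subset _ _ hw₁)
      exact no_triangle hT hvv' hv'w₁ hvw₁

end Stmt16

/-- Bundled configuration for the main construction. -/
structure Cfg (V : Type*) [Fintype V] where
  T : SimpleGraph V
  hT : T.IsTree
  k : ℕ
  hk : 3 ≤ k
  D : Finset V
  hcard : D.card = k
  hdeg : ∀ v ∈ D, k ≤ T.degree v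
  hstar : ∀ v, v ∉ D → ∃ w ∈ D, ¬ T.Adj v w
  r : V
  hr : r ∈ D
  c : V → Fin k
  hcinj : Set.InjOn c ↑D
  hcsurj : ∀ γ : Fin k, ∃ v ∈ D, c v = γ

namespace Cfg
open Stmt16
variable {V : Type*} [Fintype V] (s : Cfg V)

noncomputable def dd (v : V) : ℕ := s.T.dist v s.r

noncomputable def par (v : V) : V :=
  if h : v = s.r then v else Classical.choose (parent_exists s.hT h)

lemma par_adj {v : V} (h : v ≠ s.r) : s.T.Adj v (s.par v) := by
  rw [par, dif_neg h]; exact (Classical.choose_spec (parent_exists s.hT h)).1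

lemma par_dist {v : V} (h : v ≠ s.r) : s.dd (s.par v) + 1 = s.dd v := by
  rw [par, dif_neg h]; exact (Classical.choose_spec (parent_exists s.hT h)).2

lemma par_eq {v p : V} (h1 : s.T.Adj v p) (h2 : s.dd p + 1 = s.dd v) : s.par v = p := by
  have hv : v ≠ s.r := by
    intro h; subst h
    have : s.dd s.r = 0 := by simp [dd]
    omega
  exact parent_unique s.hT (s.par_adj hv) (s.par_dist hv) h1 h2

noncomputable def children (u : V) : Finset V :=
  (s.T.neighborFinset u).filter fun x => s.dd x = s.dd u + 1

lemma mem_children {u x : V} : x ∈ s.children u ↔ s.T.Adj u x ∧ s.dd x = s.dd u + 1 := by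
  simp [children, SimpleGraph.mem_neighborFinset]

lemma par_of_child {u x : V} (h : x ∈ s.children u) : s.par x = u := by
  rw [s.mem_children] at h
  exact s.par_eq h.1.symm (by omega)

lemma child_of_adj {u x : V} (h : s.T.Adj u x) (h2 : ¬ s.dd u = s.dd x + 1) :
    x ∈ s.children u := by
  rcases adj_cases s.hT s.r h with h3 | h3
  · exact absurd h3 h2
  · exact s.mem_children.2 ⟨h, h3⟩

/-- every neighbor is a child or the parent -/
lemma adj_split {u x : V} (h : s.T.Adj u x) : x ∈ s.children u ∨ (u ≠ s.r ∧ x = s.par u) := by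
  rcases adj_cases s.hT s.r h with h3 | h3
  · right
    have hu : u ≠ s.r := by
      intro he; subst he
      have : s.dd s.r = 0 := by simp [dd]
      unfold dd at *; omega
    exact ⟨hu, (s.par_eq h (by unfold dd; omega)).symm⟩
  · left; exact s.mem_children.2 ⟨h, h3⟩

lemma r_not_child {u : V} : s.r ∉ s.children u := by
  intro h
  rw [mem_children] at h
  have : s.dd s.r = 0 := by simp [dd]
  omega

noncomputable def needed (u : V) : Finset (Fin s.k) :=
  Finset.univ \ insert (s.c u) ((s.D ∩ s.T.neighborFinset u).image s.c)

noncomputable def Agood (u : V) (γ : Fin s.k) : Finset V :=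
  (s.children u).filter fun x => x ∉ s.D ∧ ∀ w ∈ s.D, s.T.Adj x w → s.c w ≠ γ

noncomputable def Fu (u : V) : Finset V := s.children u \ s.D

lemma dd_r : s.dd s.r = 0 := by simp [dd]

lemma dd_pos {v : V} (h : v ≠ s.r) : 0 < s.dd v := dist_pos_of_ne s.hT h

lemma adj_r {u : V} (h : s.T.Adj u s.r) : s.dd u = 1 ∧ s.par u = s.r := by
  have h2 := adj_cases s.hT s.r h
  have h3 := s.dd_r
  unfold dd at *
  have h4 : s.T.dist u s.r = 1 := by omega
  exact ⟨h4, s.par_eq h (by unfold dd; omega)⟩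

lemma nonchildren {u : V} :
    (s.T.neighborFinset u).filter (fun x => ¬ s.dd x = s.dd u + 1)
      = if u = s.r then ∅ else {s.par u} := by
  split_ifs with hr
  · subst hr
    ext x
    simp only [mem_filter, SimpleGraph.mem_neighborFinset, Finset.notMem_empty, iff_false]
    rintro ⟨h1, h2⟩
    rcases adj_cases s.hT s.r h1 with h3 | h3
    · have := s.dd_r; unfold dd at *; omega
    · exact h2 h3
  · ext x
    simp only [mem_filter, SimpleGraph.mem_neighborFinset, Finset.mem_singleton]
    constructor
    · rintro ⟨h1, h2⟩
      rcases adj_cases s.hT s.r h1 with h3 | h3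
      · exact (s.par_eq h1 (by unfold dd; omega)).symm
      · exact absurd h3 h2
    · rintro rfl
      have h1 := s.par_adj hr
      have h2 := s.par_dist hr
      exact ⟨h1, by unfold dd at *; omega⟩

lemma children_card {u : V} :
    (s.children u).card + (if u = s.r then 0 else 1) = s.T.degree u := by
  have := Finset.card_filter_add_card_filter_not
    (s := s.T.neighborFinset u) (p := fun x => s.dd x = s.dd u + 1)
  rw [s.nonchildren] at this
  rw [SimpleGraph.degree]
  split_ifs at this ⊢ with h
  · simpa [children] using this
  · simp only [Finset.card_singleton] at this
    simpa [children] using this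

lemma needed_card {u : V} (hu : u ∈ s.D) :
    (s.needed u).card + ((s.D ∩ s.T.neighborFinset u).card + 1) = s.k := by
  have himg : ((s.D ∩ s.T.neighborFinset u).image s.c).card
      = (s.D ∩ s.T.neighborFinset u).card := by
    apply Finset.card_image_of_injOn
    intro a ha b hb hab
    exact s.hcinj (by exact_mod_cast (Finset.mem_inter.1 ha).1)
      (by exact_mod_cast (Finset.mem_inter.1 hb).1) hab
  have hnotmem : s.c u ∉ (s.D ∩ s.T.neighborFinset u).image s.c := by
    intro hmem
    obtain ⟨w, hw, hcw⟩ := Finset.mem_image.1 hmem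
    rw [Finset.mem_inter, SimpleGraph.mem_neighborFinset] at hw
    have : w = u := s.hcinj (by exact_mod_cast hw.1) (by exact_mod_cast hu) hcw
    subst this
    exact s.T.irrefl hw.2
  have hins : (insert (s.c u) ((s.D ∩ s.T.neighborFinset u).image s.c)).card
      = (s.D ∩ s.T.neighborFinset u).card + 1 := by
    rw [Finset.card_insert_of_notMem hnotmem, himg]
  have hsub : insert (s.c u) ((s.D ∩ s.T.neighborFinset u).image s.c) ⊆ Finset.univ :=
    Finset.subset_univ _
  rw [needed, Finset.card_sdiff_of_subset hsub, hins, Finset.card_univ, Fintype.card_fin]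
  have := Finset.card_le_card hsub
  rw [hins, Finset.card_univ, Fintype.card_fin] at this
  omega

lemma inter_nbr_card {u : V} (hur : u ≠ s.r) :
    (s.D ∩ s.T.neighborFinset u).card
      = (s.D ∩ s.children u).card + (if s.par u ∈ s.D then 1 else 0) := by
  have hsplit : s.D ∩ s.T.neighborFinset u
      = (s.D ∩ s.children u) ∪ (if s.par u ∈ s.D then {s.par u} else ∅) := by
    ext x
    simp only [Finset.mem_inter, SimpleGraph.mem_neighborFinset, Finset.mem_union]
    constructor
    · rintro ⟨hxD, hadj⟩
      rcases s.adj_split hadj with h | ⟨_, rfl⟩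
      · exact Or.inl ⟨hxD, h⟩
      · right; rw [if_pos hxD]; exact Finset.mem_singleton_self _
    · intro h
      rcases h with ⟨hxD, hch⟩ | h
      · exact ⟨hxD, (s.mem_children.1 hch).1⟩
      · split_ifs at h with hpD
        · rw [Finset.mem_singleton] at h; subst h
          exact ⟨hpD, s.par_adj hur⟩
        · exact absurd h (Finset.notMem_empty _)
    
  rw [hsplit, Finset.card_union_of_disjoint]
  · split_ifs with h <;> simp
  · split_ifs with h
    · rw [Finset.disjoint_singleton_right, Finset.mem_inter]
      rintro ⟨-, hch⟩
      have := (s.mem_children.1 hch).2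
      have := s.par_dist hur
      unfold dd at *; omega
    · exact Finset.disjoint_empty_right _

lemma Agood_subset {u : V} {γ : Fin s.k} : s.Agood u γ ⊆ s.Fu u := by
  intro x hx
  rw [Agood, Finset.mem_filter] at hx
  rw [Fu, Finset.mem_sdiff]
  exact ⟨hx.1, hx.2.1⟩

lemma Fu_card {u : V} (hu : u ∈ s.D) :
    (s.needed u).card ≤ (s.Fu u).card
    ∧ ((s.needed u).card = (s.Fu u).card → (u ≠ s.r ∧ s.par u ∉ s.D)) := by
  have hdeg := s.hdeg u hu
  have hch := s.children_card (u := u)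
  have hnc := s.needed_card hu
  have hsub : s.D ∩ s.children u ⊆ s.children u := Finset.inter_subset_right
  have hFu : (s.Fu u).card + (s.D ∩ s.children u).card = (s.children u).card := by
    rw [Fu, ← Finset.sdiff_inter_self_right (s.children u) s.D]
    exact Finset.card_sdiff_add_card_eq_card Finset.inter_subset_right
  by_cases hur : u = s.r
  · subst hur
    -- par doesn't matter; j = children∩D card
    have hint : s.D ∩ s.T.neighborFinset s.r = s.D ∩ s.children s.r := by
      ext x
      simp only [Finset.mem_inter, SimpleGraph.mem_neighborFinset]
      constructor
      · rintro ⟨h1, h2⟩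
        refine ⟨h1, s.child_of_adj h2 ?_⟩
        have := s.dd_r
        have := s.dd_pos (v := x) (fun he => by subst he; exact s.T.irrefl h2)
        omega
      · rintro ⟨h1, h2⟩; exact ⟨h1, (s.mem_children.1 h2).1⟩
    rw [hint] at hnc
    have hch' : (s.children s.r).card = s.T.degree s.r := by
      simpa using hch
    constructor
    · omega
    · intro he; omega
  · have hint := s.inter_nbr_card hur
    simp only [if_neg hur] at hch
    by_cases hpD : s.par u ∈ s.D
    · rw [if_pos hpD] at hint
      refine ⟨by omega, fun he => by omega⟩
    · rw [if_neg hpD] at hint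
      exact ⟨by omega, fun he => ⟨hur, hpD⟩⟩








lemma excluded_le_one {u : V} (hu : u ∈ s.D) {γ : Fin s.k} (hγ : γ ∈ s.needed u) :
    (s.Fu u \ s.Agood u γ).card ≤ 1 := by
  rw [Finset.card_le_one]
  intro x hx y hy
  by_contra hxy
  have wit : ∀ z ∈ s.Fu u \ s.Agood u γ,
      z ∈ s.children u ∧ z ∉ s.D ∧ ∃ w ∈ s.D, s.T.Adj z w ∧ s.c w = γ := by
    intro z hz
    rw [Finset.mem_sdiff, Fu, Finset.mem_sdiff] at hz
    obtain ⟨⟨hzch, hzD⟩, hz2⟩ := hz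
    refine ⟨hzch, hzD, ?_⟩
    by_contra hc
    push_neg at hc
    exact hz2 (by rw [Agood, Finset.mem_filter]
                  exact ⟨hzch, hzD, fun w hw hadj hcw => (hc w hw hadj hcw).elim⟩)
  obtain ⟨hxch, hxD, w, hwD, hwadj, hwc⟩ := wit x hx
  obtain ⟨hych, hyD, w', hwD', hwadj', hwc'⟩ := wit y hy
  have hww : w = w' := s.hcinj (by exact_mod_cast hwD) (by exact_mod_cast hwD') (by rw [hwc, hwc'])
  subst hww
  -- γ ∈ needed u means c w = γ ≠ c u and w not adjacent-to-u-in-D... we need u ≠ w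
  have huw : u ≠ w := by
    rintro rfl
    rw [needed, Finset.mem_sdiff] at hγ
    exact hγ.2 (by rw [← hwc]; exact Finset.mem_insert_self _ _)
  exact no_c4 s.hT (s.mem_children.1 hxch).1 hwadj (s.mem_children.1 hych).1 hwadj' hxy huw

lemma cr_needed {u : V} (hu : u ∈ s.D) (hur : u ≠ s.r) (hpD : s.par u ∉ s.D) :
    s.c s.r ∈ s.needed u := by
  rw [needed, Finset.mem_sdiff]
  refine ⟨Finset.mem_univ _, ?_⟩
  intro hmem
  rw [Finset.mem_insert] at hmem
  rcases hmem with h | h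
  · exact hur (s.hcinj (by exact_mod_cast s.hr) (by exact_mod_cast hu) h).symm
  · obtain ⟨w, hw, hcw⟩ := Finset.mem_image.1 h
    rw [Finset.mem_inter, SimpleGraph.mem_neighborFinset] at hw
    have : w = s.r := s.hcinj (by exact_mod_cast hw.1) (by exact_mod_cast s.hr) hcw
    subst this
    have := (s.adj_r hw.2).2
    exact hpD (this ▸ hw.1)

lemma Fu_sub_Agood_cr {u : V} (hu : u ∈ s.D) (hur : u ≠ s.r) :
    s.Fu u ⊆ s.Agood u (s.c s.r) := by
  intro x hx
  rw [Fu, Finset.mem_sdiff] at hx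
  rw [Agood, Finset.mem_filter]
  refine ⟨hx.1, hx.2, ?_⟩
  intro w hwD hadj hcw
  have : w = s.r := s.hcinj (by exact_mod_cast hwD) (by exact_mod_cast s.hr) hcw
  subst this
  have h1 := (s.adj_r hadj).1
  have h2 := (s.mem_children.1 hx.1).2
  have h3 := s.dd_pos hur
  omega

lemma exists_match {u : V} (hu : u ∈ s.D) :
    ∃ ψ : Fin s.k → V, Set.InjOn ψ ↑(s.needed u) ∧ ∀ γ ∈ s.needed u, ψ γ ∈ s.Agood u γ := by
  have hall : ∀ t : Finset ↥(s.needed u),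
      t.card ≤ (t.biUnion (fun γ => s.Agood u γ.1)).card := by
    intro t
    rcases Finset.eq_empty_or_nonempty t with rfl | ⟨γ₀, hγ₀⟩
    · simp
    have hsub : t.biUnion (fun γ => s.Agood u γ.1) ⊆ s.Fu u := by
      intro x hx
      obtain ⟨γ, _, hγx⟩ := Finset.mem_biUnion.1 hx
      exact s.Agood_subset hγx
    have hlb : (s.Fu u).card - 1 ≤ (t.biUnion (fun γ => s.Agood u γ.1)).card := by
      have h1 : s.Fu u \ t.biUnion (fun γ => s.Agood u γ.1) ⊆ s.Fu u \ s.Agood u γ₀.1 := by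
        intro x hx
        rw [Finset.mem_sdiff] at hx ⊢
        refine ⟨hx.1, fun hc => hx.2 (Finset.mem_biUnion.2 ⟨γ₀, hγ₀, hc⟩)⟩
      have h2 := Finset.card_le_card h1
      have h3 := s.excluded_le_one hu γ₀.2
      have h4 : (s.Fu u).card ≤ (t.biUnion (fun γ => s.Agood u γ.1)).card
          + (s.Fu u \ t.biUnion (fun γ => s.Agood u γ.1)).card := by
        have := Finset.card_sdiff_add_card_eq_card hsub
        omega
      omega
    have htn : t.card ≤ (s.needed u).card := by
      have : t.card ≤ Fintype.card ↥(s.needed u) := Finset.card_le_univ t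
      simpa [Fintype.card_coe] using this
    have hnf := (s.Fu_card hu).1
    by_cases hteq : t.card = (s.Fu u).card
    · -- tight case
      have hneq : (s.needed u).card = (s.Fu u).card := by omega
      obtain ⟨hur, hpD⟩ := (s.Fu_card hu).2 hneq
      have hcr := s.cr_needed hu hur hpD
      have ht_univ : t = Finset.univ := by
        apply Finset.eq_univ_of_card
        rw [Fintype.card_coe]
        omega
      have : s.Fu u ⊆ t.biUnion (fun γ => s.Agood u γ.1) := by
        intro x hx
        rw [Finset.mem_biUnion]
        exact ⟨⟨s.c s.r, hcr⟩, ht_univ ▸ Finset.mem_univ _, s.Fu_sub_Agood_cr hu hur hx⟩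
      have := Finset.card_le_card this
      omega
    · omega
  obtain ⟨ψ₀, hinj, hmem⟩ :=
    (Finset.all_card_le_biUnion_card_iff_exists_injective (fun γ : ↥(s.needed u) => s.Agood u γ.1)).1 hall
  refine ⟨fun γ => if h : γ ∈ s.needed u then ψ₀ ⟨γ, h⟩ else s.r, ?_, ?_⟩
  · intro a ha b hb hab
    rw [Finset.mem_coe] at ha hb
    simp only [dif_pos ha, dif_pos hb] at hab
    have := hinj hab
    exact Subtype.ext_iff.1 this
  · intro γ hγ
    simp only [dif_pos hγ]
    exact hmem _








noncomputable def psi (u : V) : Fin s.k → V :=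
  if h : u ∈ s.D then Classical.choose (s.exists_match h) else fun _ => s.r

lemma psi_injOn {u : V} (hu : u ∈ s.D) : Set.InjOn (s.psi u) ↑(s.needed u) := by
  rw [psi, dif_pos hu]; exact (Classical.choose_spec (s.exists_match hu)).1

lemma psi_mem {u : V} (hu : u ∈ s.D) {γ : Fin s.k} (hγ : γ ∈ s.needed u) :
    s.psi u γ ∈ s.Agood u γ := by
  rw [psi, dif_pos hu]; exact (Classical.choose_spec (s.exists_match hu)).2 γ hγ

def matchedAt (v : V) : Prop :=
  v ∉ s.D ∧ s.par v ∈ s.D ∧ ∃ γ, γ ∈ s.needed (s.par v) ∧ s.psi (s.par v) γ = v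

noncomputable def col (v : V) : Fin s.k :=
  if h : v ∈ s.D then s.c v
  else if hm : s.matchedAt v then Classical.choose hm.2.2
  else
    (if h1 : (Finset.univ \ insert (s.c s.r) (insert (col (s.par v))
        ((s.D ∩ s.children v).image s.c))).Nonempty then
      (Finset.univ \ insert (s.c s.r) (insert (col (s.par v))
        ((s.D ∩ s.children v).image s.c))).min' h1
    else if h2 : (Finset.univ \ insert (col (s.par v))
        ((s.D ∩ s.children v).image s.c)).Nonempty then
      (Finset.univ \ insert (col (s.par v))
        ((s.D ∩ s.children v).image s.c)).min' h2
    else ⟨0, by have := s.hk; omega⟩)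
termination_by s.dd v
decreasing_by
  all_goals
    have hv : v ≠ s.r := fun he => h (he ▸ s.hr)
    have := s.par_dist hv
    omega







lemma col_mem {v : V} (h : v ∈ s.D) : s.col v = s.c v := by
  rw [col, dif_pos h]

lemma col_matched {v : V} (h1 : v ∉ s.D) (hm : s.matchedAt v) :
    s.col v ∈ s.needed (s.par v) ∧ s.psi (s.par v) (s.col v) = v := by
  rw [col, dif_neg h1, dif_pos hm]
  exact Classical.choose_spec hm.2.2

/-- the "safe" set for phase-3 vertices -/
noncomputable def S2 (v : V) : Finset (Fin s.k) :=
  Finset.univ \ insert (s.col (s.par v)) ((s.D ∩ s.children v).image s.c)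

lemma col_phase3 {v : V} (h1 : v ∉ s.D) (hm : ¬ s.matchedAt v) (hS2 : (s.S2 v).Nonempty) :
    s.col v ∈ s.S2 v := by
  rw [col, dif_neg h1, dif_neg hm]
  by_cases hA : (Finset.univ \ insert (s.c s.r) (insert (s.col (s.par v))
      ((s.D ∩ s.children v).image s.c))).Nonempty
  · rw [dif_pos hA]
    have h3 := Finset.min'_mem _ hA
    rw [Finset.mem_sdiff] at h3
    rw [S2, Finset.mem_sdiff]
    exact ⟨h3.1, fun hc => h3.2 (Finset.mem_insert_of_mem hc)⟩
  · rw [dif_neg hA]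
    have hS2' : (Finset.univ \ insert (s.col (s.par v))
        ((s.D ∩ s.children v).image s.c)).Nonempty := hS2
    rw [dif_pos hS2']
    exact (s.S2 v).min'_mem hS2

lemma col_phase3_ne_cr {v : V} (h1 : v ∉ s.D) (hm : ¬ s.matchedAt v)
    (hS1 : (Finset.univ \ insert (s.c s.r) (insert (s.col (s.par v))
        ((s.D ∩ s.children v).image s.c))).Nonempty) :
    s.col v ≠ s.c s.r := by
  rw [col, dif_neg h1, dif_neg hm, dif_pos hS1]
  have h3 := Finset.min'_mem _ hS1
  rw [Finset.mem_sdiff] at h3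
  intro hc
  exact h3.2 (by rw [hc]; exact Finset.mem_insert_self _ _)








lemma ne_r_of_not_D {v : V} (h : v ∉ s.D) : v ≠ s.r := fun he => h (he ▸ s.hr)

lemma matched_spec {v : V} (hm : s.matchedAt v) :
    v ∉ s.D ∧ s.par v ∈ s.D ∧ s.col v ∈ s.needed (s.par v) ∧ v ∈ s.Agood (s.par v) (s.col v) := by
  obtain ⟨h1, h2, -⟩ := id hm
  obtain ⟨h3, h4⟩ := s.col_matched h1 hm
  have h5 := s.psi_mem h2 h3
  rw [h4] at h5
  exact ⟨h1, h2, h3, h5⟩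

lemma matched_rule {v : V} (hm : s.matchedAt v) {w : V} (hw : w ∈ s.D) (hadj : s.T.Adj v w) :
    s.c w ≠ s.col v := by
  obtain ⟨-, -, -, h4⟩ := s.matched_spec hm
  rw [Agood, Finset.mem_filter] at h4
  exact h4.2.2 w hw hadj

lemma needed_ne_cu {u : V} {γ : Fin s.k} (h : γ ∈ s.needed u) : γ ≠ s.c u := by
  rw [needed, Finset.mem_sdiff] at h
  exact fun he => h.2 (he ▸ Finset.mem_insert_self _ _)

lemma image_cD : s.D.image s.c = Finset.univ := by
  apply Finset.eq_univ_of_card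
  rw [Finset.card_image_of_injOn (fun a ha b hb => s.hcinj (by exact_mod_cast ha) (by exact_mod_cast hb)),
    s.hcard, Fintype.card_fin]

/-- crowded case: D ∩ children v has k-1 elements forces it to be D.erase r -/
lemma crowded_struct {v : V} (hv : v ∉ s.D) (hc : (s.D ∩ s.children v).card = s.k - 1) :
    s.D ∩ s.children v = s.D.erase s.r := by
  apply Finset.eq_of_subset_of_card_le
  · intro w hw
    rw [Finset.mem_inter] at hw
    rw [Finset.mem_erase]
    refine ⟨?_, hw.1⟩
    rintro rfl
    exact s.r_not_child hw.2
  · rw [Finset.card_erase_of_mem s.hr, s.hcard, hc]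

lemma crowded_par_ne_cr {v : V} (hv : v ∉ s.D) (hm : ¬ s.matchedAt v)
    (hc : (s.D ∩ s.children v).card = s.k - 1) : s.col (s.par v) ≠ s.c s.r := by
  have hvr : v ≠ s.r := s.ne_r_of_not_D hv
  have hstruct := s.crowded_struct hv hc
  set p := s.par v with hp
  have hpadj : s.T.Adj v p := s.par_adj hvr
  have hpdist : s.dd p + 1 = s.dd v := s.par_dist hvr
  -- p ∉ D
  have hpD : p ∉ s.D := by
    intro hpD
    have hpr : p = s.r := by
      by_contra hpr
      have : p ∈ s.D.erase s.r := Finset.mem_erase.2 ⟨hpr, hpD⟩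
      rw [← hstruct, Finset.mem_inter] at this
      have hcc : s.dd p = s.dd v + 1 := (s.mem_children.1 this.2).2
      omega
    obtain ⟨w, hwD, hwadj⟩ := s.hstar v hv
    rcases Finset.mem_insert.1 ((Finset.insert_erase s.hr).symm ▸ hwD : w ∈ insert s.r (s.D.erase s.r)) with rfl | hw
    · exact hwadj (hpr ▸ hpadj)
    · rw [← hstruct, Finset.mem_inter] at hw
      exact hwadj (s.mem_children.1 hw.2).1
  by_cases hmp : s.matchedAt p
  · -- p matched; its matcher is r
    have hzD := hmp.2.1
    have hzr : s.par p = s.r := by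
      by_contra hzr
      have : s.par p ∈ s.D.erase s.r := Finset.mem_erase.2 ⟨hzr, hzD⟩
      rw [← hstruct, Finset.mem_inter] at this
      have h5 : s.dd (s.par p) = s.dd v + 1 := (s.mem_children.1 this.2).2
      have hpr : p ≠ s.r := s.ne_r_of_not_D hpD
      have h6 : s.dd (s.par p) + 1 = s.dd p := s.par_dist hpr
      omega
    have hadjpr : s.T.Adj p s.r := hzr ▸ s.par_adj (s.ne_r_of_not_D hpD)
    exact (s.matched_rule hmp s.hr hadjpr).symm
  · -- p phase-3
    apply s.col_phase3_ne_cr hpD hmp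
    have hDchp : s.D ∩ s.children p = ∅ := by
      rw [Finset.eq_empty_iff_forall_notMem]
      intro w hw
      rw [Finset.mem_inter] at hw
      rcases Finset.mem_insert.1 ((Finset.insert_erase s.hr).symm ▸ hw.1 : w ∈ insert s.r (s.D.erase s.r)) with rfl | hw2
      · exact s.r_not_child hw.2
      · rw [← hstruct, Finset.mem_inter] at hw2
        have h1 : s.par w = v := s.par_of_child hw2.2
        have h2 : s.par w = p := s.par_of_child hw.2
        exact s.T.irrefl (h1 ▸ h2 ▸ hpadj)
    rw [hDchp]
    have hcard : (insert (s.c s.r) (insert (s.col (s.par p)) ((∅ : Finset V).image s.c))).card ≤ 2 := by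
      simp only [Finset.image_empty]
      exact le_trans (Finset.card_insert_le _ _) (by simp)
    rw [← Finset.card_pos, Finset.card_sdiff_of_subset (Finset.subset_univ _), Finset.card_univ, Fintype.card_fin]
    have hk := s.hk
    omega

lemma S2_nonempty {v : V} (hv : v ∉ s.D) (hm : ¬ s.matchedAt v) : (s.S2 v).Nonempty := by
  rw [S2, ← Finset.card_pos, Finset.card_sdiff_of_subset (Finset.subset_univ _), Finset.card_univ,
    Fintype.card_fin]
  have hk := s.hk
  have himg : ((s.D ∩ s.children v).image s.c).card = (s.D ∩ s.children v).card :=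
    Finset.card_image_of_injOn (fun a ha b hb => s.hcinj
      (by exact_mod_cast (Finset.mem_inter.1 ha).1) (by exact_mod_cast (Finset.mem_inter.1 hb).1))
  have hsub : s.D ∩ s.children v ⊆ s.D.erase s.r := by
    intro w hw
    rw [Finset.mem_inter] at hw
    rw [Finset.mem_erase]
    exact ⟨fun he => s.r_not_child (he ▸ hw.2), hw.1⟩
  have hle : (s.D ∩ s.children v).card ≤ s.k - 1 := by
    have := Finset.card_le_card hsub
    rw [Finset.card_erase_of_mem s.hr, s.hcard] at this
    exact this
  by_cases hcrowd : (s.D ∩ s.children v).card = s.k - 1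
  · -- the insert-set avoids c r
    have hne := s.crowded_par_ne_cr hv hm hcrowd
    have hsubset : insert (s.col (s.par v)) ((s.D ∩ s.children v).image s.c)
        ⊆ Finset.univ.erase (s.c s.r) := by
      intro γ hγ
      rw [Finset.mem_erase]
      rcases Finset.mem_insert.1 hγ with rfl | hγ2
      · exact ⟨hne, Finset.mem_univ _⟩
      · obtain ⟨w, hw, hcw⟩ := Finset.mem_image.1 hγ2
        have hw' := hsub hw
        rw [Finset.mem_erase] at hw'
        refine ⟨?_, Finset.mem_univ _⟩
        rw [← hcw]
        intro he
        exact hw'.1 (s.hcinj (by exact_mod_cast hw'.2) (by exact_mod_cast s.hr) he)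
    have := Finset.card_le_card hsubset
    rw [Finset.card_erase_of_mem (Finset.mem_univ _), Finset.card_univ, Fintype.card_fin] at this
    omega
  · have := Finset.card_insert_le (s.col (s.par v)) ((s.D ∩ s.children v).image s.c)
    omega

/-- main properness, oriented -/
lemma proper_child {a b : V} (hadj : s.T.Adj a b) (hd : s.dd b = s.dd a + 1) :
    s.col a ≠ s.col b := by
  have hb_ch : b ∈ s.children a := s.mem_children.2 ⟨hadj, hd⟩
  have hpar : s.par b = a := s.par_of_child hb_ch
  by_cases hbD : b ∈ s.D
  · rw [s.col_mem hbD]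
    by_cases haD : a ∈ s.D
    · rw [s.col_mem haD]
      exact fun he => hadj.ne (s.hcinj (by exact_mod_cast haD) (by exact_mod_cast hbD) he)
    · by_cases hma : s.matchedAt a
      · exact fun he => (s.matched_rule hma hbD hadj) he.symm
      · have h2 := s.col_phase3 haD hma (s.S2_nonempty haD hma)
        rw [S2, Finset.mem_sdiff] at h2
        intro he
        apply h2.2
        apply Finset.mem_insert_of_mem
        exact Finset.mem_image.2 ⟨b, Finset.mem_inter.2 ⟨hbD, hb_ch⟩, he.symm⟩
  · by_cases hmb : s.matchedAt b
    · have h3 := (s.matched_spec hmb).2.2.1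
      have haD : a ∈ s.D := hpar ▸ hmb.2.1
      rw [s.col_mem haD]
      exact fun he => (s.needed_ne_cu (hpar ▸ h3)) (by rw [← he])
    · have h2 := s.col_phase3 hbD hmb (s.S2_nonempty hbD hmb)
      rw [S2, Finset.mem_sdiff] at h2
      intro he
      exact h2.2 (hpar ▸ (he ▸ Finset.mem_insert_self _ _))

lemma proper : ∀ v w, s.T.Adj v w → s.col v ≠ s.col w := by
  intro v w hadj
  rcases adj_cases s.hT s.r hadj with h | h
  · exact (s.proper_child hadj.symm (by unfold dd; omega)).symm
  · exact s.proper_child hadj (by unfold dd; omega)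

lemma domination {u : V} (hu : u ∈ s.D) {γ : Fin s.k} (hγ : γ ≠ s.c u) :
    ∃ x, s.T.Adj u x ∧ s.col x = γ := by
  by_cases hsup : γ ∈ (s.D ∩ s.T.neighborFinset u).image s.c
  · obtain ⟨w, hw, hcw⟩ := Finset.mem_image.1 hsup
    rw [Finset.mem_inter, SimpleGraph.mem_neighborFinset] at hw
    exact ⟨w, hw.2, by rw [s.col_mem hw.1]; exact hcw⟩
  · have hne : γ ∈ s.needed u := by
      rw [needed, Finset.mem_sdiff]
      refine ⟨Finset.mem_univ _, ?_⟩
      intro hmem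
      rcases Finset.mem_insert.1 hmem with he | he
      · exact hγ he
      · exact hsup he
    set x := s.psi u γ with hx
    have hxA := s.psi_mem hu hne
    rw [Agood, Finset.mem_filter] at hxA
    obtain ⟨hxch, hxD, -⟩ := hxA
    have hpx : s.par x = u := s.par_of_child hxch
    have hmx : s.matchedAt x := ⟨hxD, hpx ▸ hu, γ, hpx ▸ hne, hpx ▸ hx.symm⟩
    obtain ⟨h1, h2⟩ := s.col_matched hxD hmx
    rw [hpx] at h1 h2
    have : s.col x = γ := s.psi_injOn hu (by exact_mod_cast h1) (by exact_mod_cast hne) (by rw [h2])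
    exact ⟨x, (s.mem_children.1 hxch).1, this⟩

theorem isBColoring : ∃ C : V → Fin s.k, IsBColoring s.T C := by
  refine ⟨s.col, s.proper, ?_⟩
  intro i
  obtain ⟨v, hvD, hcv⟩ := s.hcsurj i
  refine ⟨v, by rw [s.col_mem hvD]; exact hcv, ?_⟩
  intro j hj
  obtain ⟨x, hadj, hcol⟩ := s.domination hvD (by rw [hcv]; exact hj)
  exact ⟨x, hadj, hcol⟩

end Cfg


/-- For every finite tree `T` with at least one vertex, `b(T) ≥ m(T) - 1`. -/
theorem stmt16 {V : Type*} [Fintype V] [Nonempty V] (T : SimpleGraph V) (hT : T.IsTree) :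
    mParam T - 1 ≤ bChrom T := by
  by_cases h2 : mParam T ≤ 1
  · have : mParam T - 1 = 0 := by omega
    rw [this]; exact Nat.zero_le _
  push_neg at h2
  have hbdd : BddAbove {k | ∃ s : Finset V, s.card = k ∧ ∀ v ∈ s, k - 1 ≤ vdeg T v} := by
    refine ⟨Fintype.card V, ?_⟩
    rintro k ⟨s, hs, -⟩
    rw [← hs, ← Finset.card_univ]
    exact Finset.card_le_card (Finset.subset_univ s)
  have hmem : mParam T ∈ {k | ∃ s : Finset V, s.card = k ∧ ∀ v ∈ s, k - 1 ≤ vdeg T v} := by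
    rw [mParam]
    exact Nat.sSup_mem ⟨0, ∅, by simp⟩ hbdd
  obtain ⟨s0, hs0card, hs0deg⟩ := hmem
  -- an edge exists
  have hE : ∃ a b : V, T.Adj a b := by
    obtain ⟨a, ha, b, hb, hab⟩ := Finset.one_lt_card.1 (by omega : 1 < s0.card)
    obtain ⟨p⟩ := hT.isConnected a b
    cases p with
    | nil => exact absurd rfl hab
    | cons h q => exact ⟨_, _, h⟩
  have hb2 : 2 ≤ bChrom T := Stmt16.le_bChrom (Stmt16.two_coloring hT hE)
  by_cases h4 : mParam T ≤ 3
  · omega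
  · push_neg at h4
    obtain ⟨s1, hs1sub, hs1card⟩ := Finset.exists_subset_card_eq (s := s0) (n := mParam T - 1) (by omega)
    have hdeg1 : ∀ v ∈ s1, mParam T - 1 ≤ T.degree v := fun v hv => by
      have h5 := hs0deg v (hs1sub hv)
      rw [Stmt16.vdeg_eq] at h5
      omega
    obtain ⟨D, hDcard, hDdeg, hDstar⟩ := Stmt16.swap_lemma hT (by omega) s1 hs1card hdeg1
    obtain ⟨r, hr⟩ := Finset.card_pos.1 (by omega : 0 < D.card)
    classical
    let e : ↥D ≃ Fin (mParam T - 1) := (D.equivFin).trans (finCongr hDcard)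
    let c : V → Fin (mParam T - 1) := fun v =>
      if h : v ∈ D then e ⟨v, h⟩ else ⟨0, by omega⟩
    have hcinj : Set.InjOn c ↑D := by
      intro a ha b hb hab
      simp only [c, dif_pos (Finset.mem_coe.1 ha), dif_pos (Finset.mem_coe.1 hb)] at hab
      have := e.injective hab
      exact congrArg Subtype.val this
    have hcsurj : ∀ γ : Fin (mParam T - 1), ∃ v ∈ D, c v = γ := by
      intro γ
      refine ⟨(e.symm γ).1, (e.symm γ).2, ?_⟩
      simp only [c, dif_pos (e.symm γ).2, Subtype.coe_eta]
      exact e.apply_symm_apply γ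
    let s : Cfg V := ⟨T, hT, mParam T - 1, by omega, D, hDcard, hDdeg, hDstar, r, hr,
      c, hcinj, hcsurj⟩
    have hfin : mParam T - 1 ≤ bChrom T := Stmt16.le_bChrom (s.isBColoring)
    omega

end Stmt16Aux
end
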